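/- arXiv:2409.14531 — 8 statements merged into one kernel-verified Lean document; each statement's English description precedes it below -/
import Mathlib

section
/- Bipartite Degeneracy Lemma (upper bound): Let d be a nonnegative integer and let G be a bipartite (i.e., 2-colorable) simple graph on a finite vertex type with n vertices, where n ≥ 2d. If G is d-degenerate, then G has at most d(n − d) edges. -/
open Finset

def IsDegenerate {V : Type*} [DecidableEq V] (G : SimpleGraph V) [DecidableRel G.Adj]
    (d : ℕ) : Prop :=
  ∀ S : Finset V, S.Nonempty → ∃ v ∈ S, (S.filter (fun u => G.Adj v u)).card ≤ d

section Aux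
variable {V : Type*} [Fintype V] [DecidableEq V] (G : SimpleGraph V) [DecidableRel G.Adj]

/-- Edges of `G` lying entirely inside `S`. -/
def edgesIn (S : Finset V) : Finset (Sym2 V) :=
  G.edgeFinset.filter (fun e => ∀ v ∈ e, v ∈ S)

lemma edgesIn_card_bipartite (S : Finset V) (c : G.Coloring (Fin 2)) :
    (edgesIn G S).card ≤
      (S.filter (fun v => c v = 0)).card * (S.filter (fun v => ¬ c v = 0)).card := by
  classical
  set A := S.filter (fun v => c v = 0)
  set B := S.filter (fun v => ¬ c v = 0)
  have h : (edgesIn G S).card ≤ (A ×ˢ B).card := by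
    apply Finset.card_le_card_of_surjOn (fun p => s(p.1, p.2))
    intro e he
    simp only [edgesIn, coe_filter, Set.mem_setOf_eq, mem_coe, SimpleGraph.mem_edgeFinset] at he
    obtain ⟨heE, hmem⟩ := he
    induction e using Sym2.ind with
    | _ u v =>
      have hadj : G.Adj u v := heE
      have hu : u ∈ S := hmem u (by simp)
      have hv : v ∈ S := hmem v (by simp)
      have hne : c u ≠ c v := c.valid hadj
      rcases eq_or_ne (c u) 0 with h0 | h0
      · refine ⟨(u, v), ?_, rfl⟩
        simp only [coe_product, Set.mem_prod, mem_coe, A, B, mem_filter]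
        exact ⟨⟨hu, h0⟩, hv, fun hcv => hne (h0.trans hcv.symm)⟩
      · refine ⟨(v, u), ?_, Sym2.eq_swap⟩
        have hcv : c v = 0 := by omega
        simp only [coe_product, Set.mem_prod, mem_coe, A, B, mem_filter]
        exact ⟨⟨hv, hcv⟩, hu, h0⟩
  simpa [Finset.card_product] using h

lemma edgesIn_key (d : ℕ) (c : G.Coloring (Fin 2)) (hdeg : IsDegenerate G d) :
    ∀ n (S : Finset V), S.card = 2 * d + n → (edgesIn G S).card ≤ d * (S.card - d) := by
  intro n
  induction n with
  | zero =>
    intro S hcard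
    have h := edgesIn_card_bipartite G S c
    have hsum : (S.filter (fun v => c v = 0)).card + (S.filter (fun v => ¬ c v = 0)).card
        = S.card := Finset.card_filter_add_card_filter_not _
    set x := (S.filter (fun v => c v = 0)).card
    set y := (S.filter (fun v => ¬ c v = 0)).card
    have hxy : x + y = 2 * d := by omega
    have hle : x * y ≤ d * d := by
      zify
      nlinarith [sq_nonneg ((x : ℤ) - y)]
    calc (edgesIn G S).card ≤ d * d := le_trans h hle
      _ = d * (S.card - d) := by
          rw [hcard]
          congr 1
          omega
  | succ n ih =>
    intro S hcard
    have hS : S.Nonempty := Finset.card_pos.mp (by omega)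
    obtain ⟨v, hvS, hvdeg⟩ := hdeg S hS
    set S' := S.erase v
    have hcard' : S'.card = 2 * d + n := by
      simp [S', Finset.card_erase_of_mem hvS, hcard]
    -- split edges
    have hsub : edgesIn G S ⊆ edgesIn G S' ∪ (edgesIn G S).filter (fun e => v ∈ e) := by
      intro e he
      by_cases hv : v ∈ e
      · exact Finset.mem_union_right _ (Finset.mem_filter.mpr ⟨he, hv⟩)
      · apply Finset.mem_union_left
        simp only [edgesIn, Finset.mem_filter] at he ⊢
        refine ⟨he.1, fun u hu => Finset.mem_erase.mpr ⟨?_, he.2 u hu⟩⟩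
        rintro rfl; exact hv hu
    have hvcount : ((edgesIn G S).filter (fun e => v ∈ e)).card ≤ d := by
      refine le_trans (Finset.card_le_card_of_surjOn (fun u => s(v, u)) ?_) hvdeg
      intro e he
      simp only [edgesIn, coe_filter, Set.mem_setOf_eq, mem_coe, Finset.mem_filter,
        SimpleGraph.mem_edgeFinset] at he
      obtain ⟨⟨heE, hmem⟩, hve⟩ := he
      induction e using Sym2.ind with
      | _ a b =>
        have hadj : G.Adj a b := heE
        rcases Sym2.mem_iff.mp hve with rfl | rfl
        · exact ⟨b, by
            simp only [coe_filter, Set.mem_setOf_eq, mem_coe]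
            exact ⟨hmem b (by simp), hadj⟩, rfl⟩
        · exact ⟨a, ⟨by
            simp only [coe_filter, Set.mem_setOf_eq, mem_coe]
            exact ⟨hmem a (by simp), hadj.symm⟩, Sym2.eq_swap⟩⟩
    calc (edgesIn G S).card
        ≤ (edgesIn G S' ∪ (edgesIn G S).filter (fun e => v ∈ e)).card :=
          Finset.card_le_card hsub
      _ ≤ (edgesIn G S').card + ((edgesIn G S).filter (fun e => v ∈ e)).card :=
          Finset.card_union_le _ _
      _ ≤ d * (S'.card - d) + d := Nat.add_le_add (ih S' hcard') hvcount
      _ = d * (S.card - d) := by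
          rw [hcard', hcard]
          have : 2 * d + n - d = d + n := by omega
          have h2 : 2 * d + (n + 1) - d = d + n + 1 := by omega
          rw [this, h2]; ring

end Aux

/-- **Bipartite Degeneracy Lemma (upper bound).** A `d`-degenerate bipartite simple graph on
`n ≥ 2d` vertices has at most `d (n - d)` edges. -/
theorem bipartite_degenerate_card_edges_le {V : Type*} [Fintype V] [DecidableEq V]
    (G : SimpleGraph V) [DecidableRel G.Adj] (d : ℕ)
    (hn : 2 * d ≤ Fintype.card V)
    (hbip : G.Colorable 2)
    (hdeg : IsDegenerate G d) :
    G.edgeFinset.card ≤ d * (Fintype.card V - d) := by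
  obtain ⟨c⟩ := hbip
  have hedges : G.edgeFinset = edgesIn G Finset.univ := by
    simp [edgesIn]
  have h := edgesIn_key G d c hdeg (Fintype.card V - 2 * d) Finset.univ (by
    simp [Finset.card_univ]; omega)
  rw [hedges]
  simpa [Finset.card_univ] using h
end

section
/- Bipartite Degeneracy Lemma (dense subgraph): Let d be a nonnegative integer and let G be a bipartite (i.e., 2-colorable) simple graph on a finite vertex type with n vertices, where n ≥ 2d. If G has more than d(n − d) edges, then there exists a nonempty finite set S of vertices such that every vertex of S has at least d + 1 neighbors inside S (i.e., G has a subgraph with minimum degree at least d + 1). -/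
open Finset

lemma bipdeg_key {V : Type*} [Fintype V] [DecidableEq V]
    (G : SimpleGraph V) [DecidableRel G.Adj] (d : ℕ) (c : G.Coloring (Fin 2))
    (H : ∀ S : Finset V, S.Nonempty → ∃ v ∈ S, (S.filter (fun u => G.Adj v u)).card ≤ d) :
    ∀ m : ℕ, 2 * d ≤ m → ∀ T : Finset V, T.card = m →
      (∑ v ∈ T, (T.filter (fun u => G.Adj v u)).card) ≤ 2 * (d * (m - d)) := by
  intro m hm
  induction m, hm using Nat.le_induction with
  | base =>
    intro T hT
    set A := T.filter (fun v => c v = 0) with hA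
    set B := T.filter (fun v => c v ≠ 0) with hB
    have hsplit : (∑ v ∈ A, (T.filter (fun u => G.Adj v u)).card)
        + (∑ v ∈ B, (T.filter (fun u => G.Adj v u)).card)
        = ∑ v ∈ T, (T.filter (fun u => G.Adj v u)).card :=
      Finset.sum_filter_add_sum_filter_not T _ _
    have hcard : A.card + B.card = 2 * d := by
      rw [hA, hB, Finset.card_filter_add_card_filter_not, hT]
    have h1 : ∀ v ∈ A, (T.filter (fun u => G.Adj v u)).card ≤ B.card := by
      intro v hv
      apply Finset.card_le_card
      intro u hu
      simp only [hA, Finset.mem_filter] at hv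
      simp only [Finset.mem_filter] at hu
      simp only [hB, Finset.mem_filter]
      refine ⟨hu.1, ?_⟩
      have := c.valid hu.2
      intro h0
      exact this (by rw [h0, hv.2])
    have h2 : ∀ v ∈ B, (T.filter (fun u => G.Adj v u)).card ≤ A.card := by
      intro v hv
      apply Finset.card_le_card
      intro u hu
      simp only [hB, Finset.mem_filter] at hv
      simp only [Finset.mem_filter] at hu
      simp only [hA, Finset.mem_filter]
      refine ⟨hu.1, ?_⟩
      have hne := c.valid hu.2
      have hv1 : c v = 1 := by omega
      have : c u ≠ 1 := by rw [← hv1]; exact fun h => hne (by rw [h])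
      omega
    have s1 : (∑ v ∈ A, (T.filter (fun u => G.Adj v u)).card) ≤ A.card * B.card := by
      simpa using Finset.sum_le_card_nsmul A _ B.card h1
    have s2 : (∑ v ∈ B, (T.filter (fun u => G.Adj v u)).card) ≤ B.card * A.card := by
      simpa using Finset.sum_le_card_nsmul B _ A.card h2
    have hab : A.card * B.card ≤ d * d := by nlinarith [sq_nonneg (A.card - B.card : ℤ)]
    have hcomm : B.card * A.card = A.card * B.card := Nat.mul_comm _ _
    have : 2 * d - d = d := by omega
    rw [this]
    omega
  | succ m hm IH =>
    intro T hT
    have hTne : T.Nonempty := by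
      rw [← Finset.card_pos, hT]; omega
    obtain ⟨v0, hv0T, hv0d⟩ := H T hTne
    set T' := T.erase v0 with hT'
    have hT'c : T'.card = m := by simp [hT', Finset.card_erase_of_mem hv0T, hT]
    have hsum : (∑ v ∈ T, (T.filter (fun u => G.Adj v u)).card)
        = (T.filter (fun u => G.Adj v0 u)).card
          + ∑ v ∈ T', (T.filter (fun u => G.Adj v u)).card := by
      exact (Finset.add_sum_erase T (fun v => (T.filter (fun u => G.Adj v u)).card) hv0T).symm
    have hstep : ∀ v ∈ T', (T.filter (fun u => G.Adj v u)).card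
        ≤ (T'.filter (fun u => G.Adj v u)).card + (if G.Adj v v0 then 1 else 0) := by
      intro v hv
      by_cases hadj : G.Adj v v0
      · simp only [hadj, if_true]
        have hsub : T.filter (fun u => G.Adj v u) ⊆ insert v0 (T'.filter (fun u => G.Adj v u)) := by
          intro u hu
          simp only [Finset.mem_filter] at hu
          rcases eq_or_ne u v0 with rfl | hne
          · exact Finset.mem_insert_self _ _
          · exact Finset.mem_insert_of_mem (by
              simp only [Finset.mem_filter, hT', Finset.mem_erase]
              exact ⟨⟨hne, hu.1⟩, hu.2⟩)
        calc (T.filter (fun u => G.Adj v u)).card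
            ≤ (insert v0 (T'.filter (fun u => G.Adj v u))).card := Finset.card_le_card hsub
          _ ≤ (T'.filter (fun u => G.Adj v u)).card + 1 := Finset.card_insert_le _ _
      · simp only [hadj, if_false]
        apply Nat.le_of_eq
        congr 1
        ext u
        simp only [Finset.mem_filter, hT', Finset.mem_erase]
        constructor
        · rintro ⟨hu, hadju⟩
          refine ⟨⟨?_, hu⟩, hadju⟩
          rintro rfl; exact hadj hadju
        · rintro ⟨⟨_, hu⟩, hadju⟩; exact ⟨hu, hadju⟩
    have hsum2 : (∑ v ∈ T', (T.filter (fun u => G.Adj v u)).card)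
        ≤ (∑ v ∈ T', (T'.filter (fun u => G.Adj v u)).card)
          + (T'.filter (fun v => G.Adj v v0)).card := by
      calc (∑ v ∈ T', (T.filter (fun u => G.Adj v u)).card)
          ≤ ∑ v ∈ T', ((T'.filter (fun u => G.Adj v u)).card + (if G.Adj v v0 then 1 else 0)) :=
            Finset.sum_le_sum hstep
        _ = (∑ v ∈ T', (T'.filter (fun u => G.Adj v u)).card)
              + ∑ v ∈ T', (if G.Adj v v0 then 1 else 0) := Finset.sum_add_distrib
        _ = _ := by rw [Finset.sum_boole]; simp
    have hback : (T'.filter (fun v => G.Adj v v0)).card ≤ d := by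
      refine le_trans (Finset.card_le_card ?_) hv0d
      intro u hu
      simp only [Finset.mem_filter, hT', Finset.mem_erase] at hu ⊢
      exact ⟨hu.1.2, hu.2.symm⟩
    have hIH := IH T' hT'c
    have harith : 2 * (d * (m + 1 - d)) = 2 * (d * (m - d)) + 2 * d := by
      have h1 : m + 1 - d = (m - d) + 1 := by omega
      rw [h1]; ring
    omega

/-- **Bipartite Degeneracy Lemma (dense subgraph form).** A bipartite simple graph on
`n ≥ 2d` vertices with more than `d (n - d)` edges has a nonempty set of vertices `S` in which
every vertex has at least `d + 1` neighbors inside `S`, i.e. a subgraph of minimum degree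
at least `d + 1`. -/
theorem bipartite_dense_exists_min_degree_subgraph {V : Type*} [Fintype V] [DecidableEq V]
    (G : SimpleGraph V) [DecidableRel G.Adj] (d : ℕ)
    (hn : 2 * d ≤ Fintype.card V)
    (hbip : G.Colorable 2)
    (hedges : d * (Fintype.card V - d) < G.edgeFinset.card) :
    ∃ S : Finset V, S.Nonempty ∧
      ∀ v ∈ S, d + 1 ≤ (S.filter (fun u => G.Adj v u)).card := by
  by_contra hcon
  push_neg at hcon
  have H : ∀ S : Finset V, S.Nonempty → ∃ v ∈ S, (S.filter (fun u => G.Adj v u)).card ≤ d := by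
    intro S hS
    obtain ⟨v, hv, hlt⟩ := hcon S hS
    exact ⟨v, hv, by omega⟩
  obtain ⟨c⟩ := hbip
  have key := bipdeg_key G d c H (Fintype.card V) hn Finset.univ (by simp)
  have hdeg : (∑ v : V, (Finset.univ.filter (fun u => G.Adj v u)).card)
      = 2 * G.edgeFinset.card := by
    rw [← SimpleGraph.sum_degrees_eq_twice_card_edges]
    apply Finset.sum_congr rfl
    intro v _
    rw [SimpleGraph.degree, SimpleGraph.neighborFinset_eq_filter]
  omega
end

section
/- Three Neighbor Lemma (closed-walk form): Let G be a simple graph, W a closed walk in G, T a type, and τ : V(G) → T a type function. Let S be a nonempty finite set of vertices such that for every v ∈ S there exist at least three distinct vertices u ∈ S with τ(u) ≠ τ(v) and with the edge {u, v} belonging to W.edges. Then there exist x, y ∈ S with τ(x) ≠ τ(y) such that x and y are interlaced on W. -/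
/-- Two distinct vertices `x` and `y` are interlaced on a closed walk `W` if the cyclic
vertex sequence of `W` contains `x … y … x … y` or `y … x … y … x`. -/
def InterlacedOn {V : Type*} {G : SimpleGraph V} {v₀ : V} (W : G.Walk v₀ v₀) (x y : V) : Prop :=
  ∃ i j k l : ℕ, i < j ∧ j < k ∧ k < l ∧ l < W.length ∧
    ((W.getVert i = x ∧ W.getVert j = y ∧ W.getVert k = x ∧ W.getVert l = y) ∨
     (W.getVert i = y ∧ W.getVert j = x ∧ W.getVert k = y ∧ W.getVert l = x))

lemma tnl_mod_lt_case {L a i : ℕ} (hL : 0 < L) (h1 : a ≤ i) (h2 : i < a + (L - a % L)) :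
    i % L = i - a + a % L := by
  have hs : a % L < L := Nat.mod_lt _ hL
  have hk : i - a < L := by omega
  have e1 : i % L = (a + (i - a)) % L := by rw [show a + (i - a) = i by omega]
  rw [e1, Nat.add_mod, Nat.mod_eq_of_lt hk, Nat.mod_eq_of_lt (by omega : a % L + (i - a) < L)]
  omega

lemma tnl_mod_ge_case {L a i : ℕ} (hL : 0 < L) (h1 : a + (L - a % L) ≤ i) (h2 : i < a + L) :
    i % L = i - (a + (L - a % L)) := by
  have hs : a % L < L := Nat.mod_lt _ hL
  have hk : i - a < L := by omega
  have e1 : i % L = (a + (i - a)) % L := by rw [show a + (i - a) = i by omega]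
  rw [e1, Nat.add_mod, Nat.mod_eq_of_lt hk]
  rw [Nat.mod_eq_sub_mod (by omega : L ≤ a % L + (i - a))]
  rw [Nat.mod_eq_of_lt (by omega)]
  omega

lemma tnl_interlace_of_cyclic {V : Type*} {G : SimpleGraph V} {v₀ : V} (W : G.Walk v₀ v₀)
    (x y : V) (a c b d : ℕ) (h1 : a < c) (h2 : c < b) (h3 : b < d) (h4 : d < a + W.length)
    (hx : W.getVert (a % W.length) = x) (hy : W.getVert (c % W.length) = y)
    (hx2 : W.getVert (b % W.length) = x) (hy2 : W.getVert (d % W.length) = y) :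
    InterlacedOn W x y := by
  set L := W.length with hLdef
  have hL : 0 < L := by omega
  have hs : a % L < L := Nat.mod_lt _ hL
  have ra : a % L = a - a + a % L := tnl_mod_lt_case hL le_rfl (by omega)
  by_cases hc : c < a + (L - a % L)
  · have rc : c % L = c - a + a % L := tnl_mod_lt_case hL (by omega) hc
    by_cases hb : b < a + (L - a % L)
    · have rb : b % L = b - a + a % L := tnl_mod_lt_case hL (by omega) hb
      by_cases hd : d < a + (L - a % L)
      · have rd : d % L = d - a + a % L := tnl_mod_lt_case hL (by omega) hd
        exact ⟨a % L, c % L, b % L, d % L, by omega, by omega, by omega, by omega,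
          Or.inl ⟨hx, hy, hx2, hy2⟩⟩
      · have rd : d % L = d - (a + (L - a % L)) := tnl_mod_ge_case hL (by omega) h4
        exact ⟨d % L, a % L, c % L, b % L, by omega, by omega, by omega, by omega,
          Or.inr ⟨hy2, hx, hy, hx2⟩⟩
    · have rb : b % L = b - (a + (L - a % L)) := tnl_mod_ge_case hL (by omega) (by omega)
      have rd : d % L = d - (a + (L - a % L)) := tnl_mod_ge_case hL (by omega) h4
      exact ⟨b % L, d % L, a % L, c % L, by omega, by omega, by omega, by omega,
        Or.inl ⟨hx2, hy2, hx, hy⟩⟩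
  · have rc : c % L = c - (a + (L - a % L)) := tnl_mod_ge_case hL (by omega) (by omega)
    have rb : b % L = b - (a + (L - a % L)) := tnl_mod_ge_case hL (by omega) (by omega)
    have rd : d % L = d - (a + (L - a % L)) := tnl_mod_ge_case hL (by omega) h4
    exact ⟨c % L, b % L, d % L, a % L, by omega, by omega, by omega, by omega,
      Or.inr ⟨hy, hx2, hy2, hx⟩⟩

lemma tnl_walk_edge_exists {V : Type*} {G : SimpleGraph V} {u v : V} (W : G.Walk u v)
    (e : Sym2 V) (he : e ∈ W.edges) :
    ∃ i, i < W.length ∧ e = s(W.getVert i, W.getVert (i + 1)) := by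
  induction W with
  | nil => simp at he
  | @cons a b c h p ih =>
    rw [SimpleGraph.Walk.edges_cons, List.mem_cons] at he
    cases he with
    | inl h0 => exact ⟨0, by simp, by simpa using h0⟩
    | inr h1 =>
      obtain ⟨i, hi, hei⟩ := ih h1
      exact ⟨i + 1, by simp; omega, by simpa [SimpleGraph.Walk.getVert_cons_succ] using hei⟩

lemma tnl_card_le_two {α : Type*} {F : Finset α} {x y : α}
    (h : ∀ z ∈ F, z = x ∨ z = y) : F.card ≤ 2 := by
  classical
  have hsub : F ⊆ {x, y} := by
    intro z hz
    rcases h z hz with rfl | rfl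
    · exact Finset.mem_insert_self _ _
    · exact Finset.mem_insert_of_mem (Finset.mem_singleton_self _)
  calc F.card ≤ ({x, y} : Finset α).card := Finset.card_le_card hsub
    _ ≤ 2 := (Finset.card_insert_le _ _).trans (by simp)


open scoped Classical in
/-- **Three Neighbor Lemma (closed-walk form).** If every vertex of a nonempty finite set `S`
has at least three neighbors along the closed walk `W` that lie in `S` and have a different
type, then some two vertices of `S` of different types are interlaced on `W`. -/
theorem three_neighbor_lemma {V : Type*} {G : SimpleGraph V} {v₀ : V} (W : G.Walk v₀ v₀)
    {T : Type*} (τ : V → T) (S : Finset V) (hS : S.Nonempty)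
    (h : ∀ v ∈ S, 3 ≤ (S.filter (fun u => τ u ≠ τ v ∧ s(u, v) ∈ W.edges)).card) :
    ∃ x ∈ S, ∃ y ∈ S, τ x ≠ τ y ∧ InterlacedOn W x y := by
  classical
  by_contra hcon
  push_neg at hcon
  set L := W.length with hL'
  set f : ℕ → V := fun i => W.getVert (i % L) with hfdef
  have fdef : ∀ i, f i = W.getVert (i % L) := fun i => by rw [hfdef]
  obtain ⟨v, hvS⟩ := hS
  have hv3 := h v hvS
  have hFne : (S.filter (fun z => τ z ≠ τ v ∧ s(z, v) ∈ W.edges)).Nonempty :=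
    Finset.card_pos.mp (by omega)
  obtain ⟨y₀, hy₀⟩ := hFne
  rw [Finset.mem_filter] at hy₀
  have hL : 0 < L := by
    have h1 : W.edges ≠ [] := List.ne_nil_of_mem hy₀.2.2
    have h2 : W.edges.length = W.length := SimpleGraph.Walk.length_edges W
    have h3 : 0 < W.edges.length := List.length_pos_iff.mpr h1
    omega
  have fper : ∀ i, f (i + L) = f i := fun i => by rw [fdef, fdef, Nat.add_mod_right]
  have fmodeq : ∀ i j, i % L = j % L → f i = f j := fun i j hij => by rw [fdef, fdef, hij]
  have hgvL : ∀ i, W.getVert (i % W.length) = f i := fun i => by rw [← hL', fdef]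
  have hgv1 : ∀ i, i < L → W.getVert i = f i := by
    intro i hi; rw [fdef, Nat.mod_eq_of_lt hi]
  have hgv2 : ∀ i, i < L → W.getVert (i + 1) = f (i + 1) := by
    intro i hi
    rcases eq_or_lt_of_le (Nat.succ_le_of_lt hi) with he | hlt
    · have he' : i + 1 = L := he
      rw [fdef, he', Nat.mod_self, hL', SimpleGraph.Walk.getVert_length,
        SimpleGraph.Walk.getVert_zero]
    · rw [fdef, Nat.mod_eq_of_lt hlt]
  have hocc : ∀ w y : V, s(y, w) ∈ W.edges →
      ∃ p, p < L ∧ f p = w ∧ (y = f (p + 1) ∨ y = f (p + (L - 1))) := by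
    intro w y he
    obtain ⟨i, hi, hei⟩ := tnl_walk_edge_exists W _ he
    rw [← hL'] at hi
    rw [hgv1 i hi, hgv2 i hi, Sym2.eq_iff] at hei
    rcases hei with ⟨h1, h2⟩ | ⟨h1, h2⟩
    · refine ⟨(i + 1) % L, Nat.mod_lt _ hL, ?_, Or.inr ?_⟩
      · rw [fmodeq ((i + 1) % L) (i + 1) (Nat.mod_mod_of_dvd _ dvd_rfl)]; exact h2.symm
      · rw [h1]
        exact fmodeq i ((i + 1) % L + (L - 1)) (by
          rw [Nat.mod_add_mod, show i + 1 + (L - 1) = i + L by omega, Nat.add_mod_right,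
            Nat.mod_eq_of_lt hi])
    · exact ⟨i, hi, h2.symm, Or.inl h1⟩
  -- existence of a "triple"
  obtain ⟨p₀, hp₀L, hfp₀, hadj₀⟩ := hocc v y₀ hy₀.2.2
  by_cases hall : ∀ y ∈ S.filter (fun z => τ z ≠ τ v ∧ s(z, v) ∈ W.edges),
      y = f (p₀ + 1) ∨ y = f (p₀ + (L - 1))
  · have := tnl_card_le_two hall; omega
  push_neg at hall
  obtain ⟨y₁, hy₁F, hne1, hne2⟩ := hall
  rw [Finset.mem_filter] at hy₁F
  obtain ⟨p₁, hp₁L, hfp₁, hadj₁⟩ := hocc v y₁ hy₁F.2.2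
  have hpp : p₀ ≠ p₁ := by rintro rfl; rcases hadj₁ with hh | hh; exacts [hne1 hh, hne2 hh]
  have hy₁v : y₁ ≠ v := fun e => hy₁F.2.1 (by rw [e])
  obtain ⟨r, hrL, hfr⟩ : ∃ r, r < L ∧ f r = y₁ := by
    rcases hadj₁ with hh | hh
    · exact ⟨(p₁ + 1) % L, Nat.mod_lt _ hL,
        by rw [fmodeq _ (p₁ + 1) (Nat.mod_mod_of_dvd _ dvd_rfl)]; exact hh.symm⟩
    · exact ⟨(p₁ + (L - 1)) % L, Nat.mod_lt _ hL,
        by rw [fmodeq _ (p₁ + (L - 1)) (Nat.mod_mod_of_dvd _ dvd_rfl)]; exact hh.symm⟩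
  have hrp₀ : r ≠ p₀ := fun e => hy₁v (by rw [← hfr, e, hfp₀])
  have hrp₁ : r ≠ p₁ := fun e => hy₁v (by rw [← hfr, e, hfp₁])
  obtain ⟨p, q, hplt, hqL, hfp, hfq, hrp, hrq⟩ :
      ∃ p q, p < q ∧ q < L ∧ f p = v ∧ f q = v ∧ r ≠ p ∧ r ≠ q := by
    rcases Nat.lt_or_ge p₀ p₁ with hh | hh
    · exact ⟨p₀, p₁, hh, hp₁L, hfp₀, hfp₁, hrp₀, hrp₁⟩
    · exact ⟨p₁, p₀, by omega, hp₀L, hfp₁, hfp₀, hrp₁, hrp₀⟩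
  have hτvy : τ v ≠ τ y₁ := fun e => hy₁F.2.1 e.symm
  have hPex : ∃ ℓ, ∃ a c : ℕ, a < c ∧ c < a + ℓ ∧ ℓ < L ∧ f a ∈ S ∧ f c ∈ S ∧
      τ (f a) ≠ τ (f c) ∧ f (a + ℓ) = f a := by
    have htri : r < p ∨ (p < r ∧ r < q) ∨ q < r := by omega
    rcases htri with hh | ⟨hh1, hh2⟩ | hh
    · refine ⟨p + L - q, q, r + L, by omega, by omega, by omega, ?_, ?_, ?_, ?_⟩
      · rw [hfq]; exact hvS
      · rw [fper, hfr]; exact hy₁F.1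
      · rw [hfq, fper, hfr]; exact hτvy
      · rw [show q + (p + L - q) = p + L by omega, fper, hfp, hfq]
    · refine ⟨q - p, p, r, by omega, by omega, by omega, ?_, ?_, ?_, ?_⟩
      · rw [hfp]; exact hvS
      · rw [hfr]; exact hy₁F.1
      · rw [hfp, hfr]; exact hτvy
      · rw [show p + (q - p) = q by omega, hfq, hfp]
    · refine ⟨p + L - q, q, r, by omega, by omega, by omega, ?_, ?_, ?_, ?_⟩
      · rw [hfq]; exact hvS
      · rw [hfr]; exact hy₁F.1
      · rw [hfq, hfr]; exact hτvy
      · rw [show q + (p + L - q) = p + L by omega, fper, hfp, hfq]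
  obtain ⟨a, c, hac, hca, hlL, haS, hcS, hτac, hfab⟩ := Nat.find_spec hPex
  have hmin := fun m (hm : m < Nat.find hPex) => Nat.find_min hPex hm
  have hfanu : f a ≠ f c := fun e => hτac (congrArg τ e)
  -- every occurrence of f c has a representative strictly inside (a, a + ℓ₀)
  have hall_u : ∀ j, f j = f c →
      ∃ j', a < j' ∧ j' < a + Nat.find hPex ∧ j' % L = j % L ∧ f j' = f c := by
    intro j hj
    have hmL : (a + 1) % L < L := Nat.mod_lt _ hL
    have hmle : (a + 1) % L ≤ a + 1 := Nat.mod_le _ _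
    have hrange : a < a + 1 + ((j + (L - (a + 1) % L)) % L) ∧
        a + 1 + ((j + (L - (a + 1) % L)) % L) ≤ a + L := by
      have := Nat.mod_lt (j + (L - (a + 1) % L)) hL
      omega
    have hdm : L * ((a + 1) / L) = (a + 1) - (a + 1) % L := by
      have := Nat.div_add_mod (a + 1) L; omega
    have hjmod : (a + 1 + ((j + (L - (a + 1) % L)) % L)) % L = j % L := by
      rw [Nat.add_mod, Nat.mod_mod_of_dvd _ dvd_rfl, ← Nat.add_mod]
      rw [show a + 1 + (j + (L - (a + 1) % L)) = j + L * ((a + 1) / L + 1) by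
        rw [Nat.mul_add, Nat.mul_one, hdm]; omega]
      rw [Nat.add_mul_mod_self_left]
    set j' := a + 1 + ((j + (L - (a + 1) % L)) % L) with hj'
    have hfj' : f j' = f c := by rw [fmodeq j' j hjmod]; exact hj
    have hne1' : j' ≠ a + Nat.find hPex := fun e => hfanu (by rw [← hfab, ← e, hfj'])
    have hne2' : j' ≠ a + L := fun e => hfanu (by rw [← fper a, ← e, hfj'])
    rcases Nat.lt_or_ge j' (a + Nat.find hPex) with hh | hh
    · exact ⟨j', hrange.1, hh, hjmod, hfj'⟩
    · exfalso
      have hbj : a + Nat.find hPex < j' := by omega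
      have hjL : j' < a + L := by omega
      exact hcon (f a) haS (f c) hcS hτac
        (tnl_interlace_of_cyclic W (f a) (f c) a c (a + Nat.find hPex) j' hac hca hbj
          (hL' ▸ hjL) (hgvL a) (hgvL c) ((hgvL (a + Nat.find hPex)).trans hfab)
          ((hgvL j').trans hfj'))
  -- occurrences of f c inside the window
  set D := (Finset.range (a + Nat.find hPex)).filter (fun i => a < i ∧ f i = f c) with hD
  have hcD : c ∈ D := by
    rw [hD]; exact Finset.mem_filter.mpr ⟨Finset.mem_range.mpr hca, hac, rfl⟩
  have hDne : D.Nonempty := ⟨c, hcD⟩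
  have hDspec : ∀ i ∈ D, a < i ∧ i < a + Nat.find hPex ∧ f i = f c := by
    intro i hi
    rw [hD] at hi
    have := Finset.mem_filter.mp hi
    exact ⟨this.2.1, Finset.mem_range.mp this.1, this.2.2⟩
  have h1 := hDspec _ (D.min'_mem hDne)
  have h2 := hDspec _ (D.max'_mem hDne)
  have hclaim : ∀ y ∈ S.filter (fun z => τ z ≠ τ (f c) ∧ s(z, f c) ∈ W.edges),
      y = f (D.min' hDne - 1) ∨ y = f (D.max' hDne + 1) := by
    intro y hy
    rw [Finset.mem_filter] at hy
    obtain ⟨hyS, hyτ, hye⟩ := hy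
    have hyne : y ≠ f c := fun e => hyτ (by rw [e])
    obtain ⟨p', hpL', hfp', hadj⟩ := hocc (f c) y hye
    obtain ⟨j', hj'1, hj'2, hj'mod, hj'f⟩ := hall_u p' hfp'
    have hj'D : j' ∈ D := by
      rw [hD]; exact Finset.mem_filter.mpr ⟨Finset.mem_range.mpr hj'2, hj'1, hj'f⟩
    have hjmin : D.min' hDne ≤ j' := D.min'_le _ hj'D
    have hjmax : j' ≤ D.max' hDne := D.le_max' _ hj'D
    rcases hadj with hh | hh
    · have hy' : y = f (j' + 1) := by
        rw [hh]
        exact fmodeq (p' + 1) (j' + 1) (by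
          calc (p' + 1) % L = (p' % L + 1) % L := (Nat.mod_add_mod p' L 1).symm
            _ = (j' % L + 1) % L := by rw [← hj'mod]
            _ = (j' + 1) % L := Nat.mod_add_mod _ _ _)
      rcases eq_or_lt_of_le hjmax with he | hlt
      · right; rw [hy', he]
      · exfalso
        have hne' : j' + 1 ≠ D.max' hDne := fun e => hyne (by rw [hy', e, h2.2.2])
        exact hmin (D.max' hDne - D.min' hDne) (by omega)
          ⟨D.min' hDne, j' + 1, by omega, by omega, by omega,
            by rw [h1.2.2]; exact hcS, by rw [← hy']; exact hyS,
            by rw [h1.2.2, ← hy']; exact fun e => hyτ e.symm,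
            by rw [show D.min' hDne + (D.max' hDne - D.min' hDne) = D.max' hDne by omega,
              h2.2.2, h1.2.2]⟩
    · have hy' : y = f (j' - 1) := by
        rw [hh]
        exact fmodeq (p' + (L - 1)) (j' - 1) (by
          calc (p' + (L - 1)) % L = (p' % L + (L - 1)) % L := (Nat.mod_add_mod p' L (L - 1)).symm
            _ = (j' % L + (L - 1)) % L := by rw [← hj'mod]
            _ = (j' + (L - 1)) % L := Nat.mod_add_mod _ _ _
            _ = (j' - 1 + L) % L := by rw [show j' + (L - 1) = j' - 1 + L by omega]
            _ = (j' - 1) % L := Nat.add_mod_right _ _)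
      rcases eq_or_lt_of_le hjmin with he | hlt
      · left; rw [hy', he]
      · exfalso
        have hne' : j' - 1 ≠ D.min' hDne := fun e => hyne (by rw [hy', e, h1.2.2])
        exact hmin (D.max' hDne - D.min' hDne) (by omega)
          ⟨D.min' hDne, j' - 1, by omega, by omega, by omega,
            by rw [h1.2.2]; exact hcS, by rw [← hy']; exact hyS,
            by rw [h1.2.2, ← hy']; exact fun e => hyτ e.symm,
            by rw [show D.min' hDne + (D.max' hDne - D.min' hDne) = D.max' hDne by omega,
              h2.2.2, h1.2.2]⟩
  have hcard2 := tnl_card_le_two hclaim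
  have := h (f c) hcS
  omega
end

section
/- Diamond Lemma (closed-walk form): Let G be a simple graph and W a closed walk in G. Let t, u, v, x be four pairwise distinct vertices such that the five edges {t,u}, {u,v}, {x,t}, {x,u}, {x,v} all belong to W.edges. Then x is interlaced on W with at least one of t, u, or v. -/
/-- Extract endpoint positions of an edge of a walk. -/
lemma edge_getVert {V : Type*} {G : SimpleGraph V} {a b : V} {p q : V} (W : G.Walk p q)
    (hm : s(a, b) ∈ W.edges) : ∃ d, d < W.length ∧
      ((W.getVert d = a ∧ W.getVert (d+1) = b) ∨
       (W.getVert d = b ∧ W.getVert (d+1) = a)) := by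
  induction W with
  | nil => simp at hm
  | cons h W ih =>
    rw [SimpleGraph.Walk.edges_cons, List.mem_cons] at hm
    rcases hm with hm | hm
    · refine ⟨0, by simp, ?_⟩
      rw [Sym2.eq_iff] at hm
      rcases hm with ⟨ha, hb⟩ | ⟨ha, hb⟩
      · exact Or.inl ⟨by simp [ha.symm], by
          rw [SimpleGraph.Walk.getVert_cons_succ, SimpleGraph.Walk.getVert_zero, hb]⟩
      · exact Or.inr ⟨by simp [hb.symm], by
          rw [SimpleGraph.Walk.getVert_cons_succ, SimpleGraph.Walk.getVert_zero, ha]⟩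
    · obtain ⟨d, hd, hc⟩ := ih hm
      refine ⟨d + 1, by simp [SimpleGraph.Walk.length_cons]; omega, ?_⟩
      rw [SimpleGraph.Walk.getVert_cons_succ, SimpleGraph.Walk.getVert_cons_succ]
      exact hc

/-- Rotating an alternating pattern back to original coordinates. -/
lemma rot_pattern {V : Type*} (f : ℕ → V) (L r : ℕ) (hr : r < L) (x y : V)
    (i j k l : ℕ) (hij : i < j) (hjk : j < k) (hkl : k < l) (hl : l < L)
    (hpat : (f ((i+r) % L) = x ∧ f ((j+r) % L) = y ∧ f ((k+r) % L) = x ∧ f ((l+r) % L) = y) ∨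
            (f ((i+r) % L) = y ∧ f ((j+r) % L) = x ∧ f ((k+r) % L) = y ∧ f ((l+r) % L) = x)) :
    ∃ i' j' k' l', i' < j' ∧ j' < k' ∧ k' < l' ∧ l' < L ∧
      ((f i' = x ∧ f j' = y ∧ f k' = x ∧ f l' = y) ∨
       (f i' = y ∧ f j' = x ∧ f k' = y ∧ f l' = x)) := by
  have hmod : ∀ m, m < L → (m + r) % L = if m + r < L then m + r else m + r - L := by
    intro m hm
    split_ifs with h
    · exact Nat.mod_eq_of_lt h
    · rw [Nat.mod_eq_sub_mod (by omega)]
      exact Nat.mod_eq_of_lt (by omega)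
  rw [hmod i (by omega), hmod j (by omega), hmod k (by omega), hmod l hl] at hpat
  by_cases c1 : i + r < L
  · by_cases c2 : j + r < L
    · by_cases c3 : k + r < L
      · by_cases c4 : l + r < L
        · rw [if_pos c1, if_pos c2, if_pos c3, if_pos c4] at hpat
          exact ⟨i+r, j+r, k+r, l+r, by omega, by omega, by omega, by omega, hpat⟩
        · rw [if_pos c1, if_pos c2, if_pos c3, if_neg c4] at hpat
          refine ⟨l+r-L, i+r, j+r, k+r, by omega, by omega, by omega, by omega, ?_⟩
          rcases hpat with ⟨h1,h2,h3,h4⟩ | ⟨h1,h2,h3,h4⟩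
          · exact Or.inr ⟨h4, h1, h2, h3⟩
          · exact Or.inl ⟨h4, h1, h2, h3⟩
      · have c4 : ¬ l + r < L := by omega
        rw [if_pos c1, if_pos c2, if_neg c3, if_neg c4] at hpat
        refine ⟨k+r-L, l+r-L, i+r, j+r, by omega, by omega, by omega, by omega, ?_⟩
        rcases hpat with ⟨h1,h2,h3,h4⟩ | ⟨h1,h2,h3,h4⟩
        · exact Or.inl ⟨h3, h4, h1, h2⟩
        · exact Or.inr ⟨h3, h4, h1, h2⟩
    · have c3 : ¬ k + r < L := by omega
      have c4 : ¬ l + r < L := by omega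
      rw [if_pos c1, if_neg c2, if_neg c3, if_neg c4] at hpat
      refine ⟨j+r-L, k+r-L, l+r-L, i+r, by omega, by omega, by omega, by omega, ?_⟩
      rcases hpat with ⟨h1,h2,h3,h4⟩ | ⟨h1,h2,h3,h4⟩
      · exact Or.inr ⟨h2, h3, h4, h1⟩
      · exact Or.inl ⟨h2, h3, h4, h1⟩
  · have c2 : ¬ j + r < L := by omega
    have c3 : ¬ k + r < L := by omega
    have c4 : ¬ l + r < L := by omega
    rw [if_neg c1, if_neg c2, if_neg c3, if_neg c4] at hpat
    exact ⟨i+r-L, j+r-L, k+r-L, l+r-L, by omega, by omega, by omega, by omega, hpat⟩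

/-- Transfer an edge-traversal fact into rotated coordinates. -/
lemma edge_transfer {V : Type*} (f : ℕ → V) (L r : ℕ) (hL : 0 < L) (hr : r < L)
    (hfL : f L = f 0) (a b : V)
    (h : ∃ d, d < L ∧ ((f d = a ∧ f (d+1) = b) ∨ (f d = b ∧ f (d+1) = a))) :
    ∃ d, d < L ∧ ((f ((d + r) % L) = a ∧ f ((d + 1 + r) % L) = b) ∨
                  (f ((d + r) % L) = b ∧ f ((d + 1 + r) % L) = a)) := by
  obtain ⟨d, hd, hc⟩ := h
  refine ⟨(d + (L - r)) % L, Nat.mod_lt _ hL, ?_⟩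
  have key1 : ((d + (L - r)) % L + r) % L = d := by
    rw [Nat.mod_add_mod]
    have h2 : d + (L - r) + r = d + L := by omega
    rw [h2, Nat.add_mod_right, Nat.mod_eq_of_lt hd]
  have key3 : f (((d + (L - r)) % L + 1 + r) % L) = f (d + 1) := by
    have h1 : (d + (L - r)) % L + 1 + r = (d + (L - r)) % L + r + 1 := by omega
    rw [h1, ← Nat.mod_add_mod, key1]
    rcases lt_or_eq_of_le (by omega : d + 1 ≤ L) with h | h
    · rw [Nat.mod_eq_of_lt h]
    · rw [h, Nat.mod_self]
      exact hfL.symm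
  rcases hc with ⟨h1, h2⟩ | ⟨h1, h2⟩
  · exact Or.inl ⟨by rw [key1]; exact h1, by rw [key3]; exact h2⟩
  · exact Or.inr ⟨by rw [key1]; exact h1, by rw [key3]; exact h2⟩

/-- Core combinatorial argument, stated for an abstract cyclic sequence starting at `x`. -/
lemma diamond_core {V : Type*} (g : ℕ → V) (L : ℕ) (x t u v : V)
    (gx0 : g 0 = x) (gxL : g L = x)
    (htu : t ≠ u) (htv : t ≠ v) (htx : t ≠ x) (huv : u ≠ v) (hux : u ≠ x) (hvx : v ≠ x)
    (Ht : ¬ ∃ i j k l : ℕ, i < j ∧ j < k ∧ k < l ∧ l < L ∧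
      ((g i = x ∧ g j = t ∧ g k = x ∧ g l = t) ∨ (g i = t ∧ g j = x ∧ g k = t ∧ g l = x)))
    (Hu : ¬ ∃ i j k l : ℕ, i < j ∧ j < k ∧ k < l ∧ l < L ∧
      ((g i = x ∧ g j = u ∧ g k = x ∧ g l = u) ∨ (g i = u ∧ g j = x ∧ g k = u ∧ g l = x)))
    (Hv : ¬ ∃ i j k l : ℕ, i < j ∧ j < k ∧ k < l ∧ l < L ∧
      ((g i = x ∧ g j = v ∧ g k = x ∧ g l = v) ∨ (g i = v ∧ g j = x ∧ g k = v ∧ g l = x)))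
    (et : ∃ d, d < L ∧ ((g d = x ∧ g (d+1) = t) ∨ (g d = t ∧ g (d+1) = x)))
    (eu : ∃ d, d < L ∧ ((g d = x ∧ g (d+1) = u) ∨ (g d = u ∧ g (d+1) = x)))
    (ev : ∃ d, d < L ∧ ((g d = x ∧ g (d+1) = v) ∨ (g d = v ∧ g (d+1) = x)))
    (etu : ∃ d, d < L ∧ ((g d = t ∧ g (d+1) = u) ∨ (g d = u ∧ g (d+1) = t)))
    (euv : ∃ d, d < L ∧ ((g d = u ∧ g (d+1) = v) ∨ (g d = v ∧ g (d+1) = u))) : False := by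
  -- separation property from non-interlacing
  have hsep : ∀ (y : V),
      (¬ ∃ i j k l : ℕ, i < j ∧ j < k ∧ k < l ∧ l < L ∧
        ((g i = x ∧ g j = y ∧ g k = x ∧ g l = y) ∨
         (g i = y ∧ g j = x ∧ g k = y ∧ g l = x))) →
      ∀ p q, 0 < p → p < L → 0 < q → q < L → g p = y → g q = y →
      ∀ a, min p q < a → a < max p q → g a ≠ x := by
    intro y Hy p q hp0 hpL hq0 hqL hgp hgq a h1 h2 hga
    rcases le_total p q with hle | hle
    · exact Hy ⟨0, p, a, q, by omega, by omega, by omega, by omega,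
        Or.inl ⟨gx0, hgp, hga, hgq⟩⟩
    · exact Hy ⟨0, q, a, p, by omega, by omega, by omega, by omega,
        Or.inl ⟨gx0, hgq, hga, hgp⟩⟩
  -- extraction of a position of y adjacent to x
  have extract : ∀ (y : V), x ≠ y →
      (∃ d, d < L ∧ ((g d = x ∧ g (d+1) = y) ∨ (g d = y ∧ g (d+1) = x))) →
      ∃ p, 0 < p ∧ p < L ∧ g p = y ∧ (g (p-1) = x ∨ g (p+1) = x) := by
    intro y hxy h
    obtain ⟨d, hd, hc⟩ := h
    rcases hc with ⟨h1, h2⟩ | ⟨h1, h2⟩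
    · have hdL : d + 1 < L := by
        rcases lt_or_eq_of_le (by omega : d + 1 ≤ L) with h | h
        · exact h
        · rw [h, gxL] at h2; exact absurd h2 hxy
      exact ⟨d + 1, by omega, hdL, h2, Or.inl (by simpa using h1)⟩
    · have hd0 : 0 < d := by
        rcases Nat.eq_zero_or_pos d with h | h
        · rw [h, gx0] at h1; exact absurd h1 hxy
        · exact h
      exact ⟨d, hd0, hd, h1, Or.inr h2⟩
  -- extraction of two adjacent positions holding y, z (both ≠ x)
  have extract2 : ∀ (y z : V), y ≠ x → z ≠ x →
      (∃ d, d < L ∧ ((g d = y ∧ g (d+1) = z) ∨ (g d = z ∧ g (d+1) = y))) →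
      ∃ p q, 0 < p ∧ p < L ∧ 0 < q ∧ q < L ∧ g p = y ∧ g q = z ∧
        (q = p + 1 ∨ p = q + 1) := by
    intro y z hy hz h
    obtain ⟨d, hd, hc⟩ := h
    have hd0 : 0 < d := by
      rcases Nat.eq_zero_or_pos d with h0 | h0
      · exfalso
        rcases hc with ⟨h1, _⟩ | ⟨h1, _⟩
        · rw [h0, gx0] at h1; exact hy h1.symm
        · rw [h0, gx0] at h1; exact hz h1.symm
      · exact h0
    have hdL : d + 1 < L := by
      rcases lt_or_eq_of_le (by omega : d + 1 ≤ L) with h0 | h0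
      · exact h0
      · exfalso
        rcases hc with ⟨_, h2⟩ | ⟨_, h2⟩
        · rw [h0, gxL] at h2; exact hz h2.symm
        · rw [h0, gxL] at h2; exact hy h2.symm
    rcases hc with ⟨h1, h2⟩ | ⟨h1, h2⟩
    · exact ⟨d, d + 1, hd0, hd, by omega, hdL, h1, h2, Or.inl rfl⟩
    · exact ⟨d + 1, d, by omega, hdL, hd0, hd, h2, h1, Or.inr rfl⟩
  obtain ⟨pt, hpt0, hptL, gpt, hat⟩ := extract t (Ne.symm htx) et
  obtain ⟨pu, hpu0, hpuL, gpu, hau⟩ := extract u (Ne.symm hux) eu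
  obtain ⟨pv, hpv0, hpvL, gpv, hav⟩ := extract v (Ne.symm hvx) ev
  obtain ⟨qt, qu, hqt0, hqtL, hqu0, hquL, gqt, gqu, hadj1⟩ := extract2 t u htx hux etu
  obtain ⟨qu', qv, hqu'0, hqu'L, hqv0, hqvL, gqu', gqv, hadj2⟩ := extract2 u v hux hvx euv
  -- "same gap" relation
  have Strans : ∀ p q r' : ℕ, (∀ a, min p q < a → a < max p q → g a ≠ x) →
      (∀ a, min q r' < a → a < max q r' → g a ≠ x) → g q ≠ x →
      ∀ a, min p r' < a → a < max p r' → g a ≠ x := by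
    intro p q r' h1 h2 hq a ha1 ha2
    by_cases hc1 : min p q < a ∧ a < max p q
    · exact h1 a hc1.1 hc1.2
    by_cases hc2 : min q r' < a ∧ a < max q r'
    · exact h2 a hc2.1 hc2.2
    have : a = q := by omega
    exact this ▸ hq
  have Ssymm : ∀ p q : ℕ, (∀ a, min p q < a → a < max p q → g a ≠ x) →
      ∀ a, min q p < a → a < max q p → g a ≠ x := by
    intro p q h a h1 h2
    exact h a (by omega) (by omega)
  have Sadj : ∀ p q : ℕ, (q = p + 1 ∨ p = q + 1) →
      ∀ a, min p q < a → a < max p q → g a ≠ x := by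
    intro p q h a h1 h2
    exfalso; omega
  have gqtx : g qt ≠ x := by rw [gqt]; exact htx
  have gqux : g qu ≠ x := by rw [gqu]; exact hux
  have gqu'x : g qu' ≠ x := by rw [gqu']; exact hux
  have gqvx : g qv ≠ x := by rw [gqv]; exact hvx
  have gptx : g pt ≠ x := by rw [gpt]; exact htx
  have gpux : g pu ≠ x := by rw [gpu]; exact hux
  have gpvx : g pv ≠ x := by rw [gpv]; exact hvx
  -- chain of same-gap facts
  have S1 : ∀ a, min pt qt < a → a < max pt qt → g a ≠ x :=
    hsep t Ht pt qt hpt0 hptL hqt0 hqtL gpt gqt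
  have S2 : ∀ a, min qt qu < a → a < max qt qu → g a ≠ x := Sadj qt qu hadj1
  have S3 : ∀ a, min qu pu < a → a < max qu pu → g a ≠ x :=
    hsep u Hu qu pu hqu0 hquL hpu0 hpuL gqu gpu
  have S4 : ∀ a, min qu qu' < a → a < max qu qu' → g a ≠ x :=
    hsep u Hu qu qu' hqu0 hquL hqu'0 hqu'L gqu gqu'
  have S5 : ∀ a, min qu' qv < a → a < max qu' qv → g a ≠ x := Sadj qu' qv hadj2
  have S6 : ∀ a, min qv pv < a → a < max qv pv → g a ≠ x :=
    hsep v Hv qv pv hqv0 hqvL hpv0 hpvL gqv gpv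
  have T1 : ∀ a, min pt qu < a → a < max pt qu → g a ≠ x := Strans pt qt qu S1 S2 gqtx
  have Stu : ∀ a, min pt pu < a → a < max pt pu → g a ≠ x := Strans pt qu pu T1 S3 gqux
  have T2 : ∀ a, min pt qu' < a → a < max pt qu' → g a ≠ x := Strans pt qu qu' T1 S4 gqux
  have T3 : ∀ a, min pt qv < a → a < max pt qv → g a ≠ x := Strans pt qu' qv T2 S5 gqu'x
  have Stv : ∀ a, min pt pv < a → a < max pt pv → g a ≠ x := Strans pt qv pv T3 S6 gqvx
  have T4 : ∀ a, min pu qu' < a → a < max pu qu' → g a ≠ x :=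
    Strans pu qu qu' (Ssymm qu pu S3) S4 gqux
  have T5 : ∀ a, min pu qv < a → a < max pu qv → g a ≠ x := Strans pu qu' qv T4 S5 gqu'x
  have Suv : ∀ a, min pu pv < a → a < max pu pv → g a ≠ x := Strans pu qv pv T5 S6 gqvx
  -- the middle one of pt, pu, pv gives a contradiction
  have mid : ∀ p m q : ℕ, p < m → m < q → g p ≠ x → g q ≠ x →
      (∀ a, min p q < a → a < max p q → g a ≠ x) →
      (g (m-1) = x ∨ g (m+1) = x) → False := by
    intro p m q h1 h2 hp hq hS hadj
    rcases hadj with h | h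
    · rcases lt_or_eq_of_le (by omega : p ≤ m - 1) with hl | he
      · exact hS (m-1) (by omega) (by omega) h
      · exact hp (he ▸ h)
    · rcases lt_or_eq_of_le (by omega : m + 1 ≤ q) with hl | he
      · exact hS (m+1) (by omega) (by omega) h
      · exact hq (he ▸ h)
  have hne1 : pt ≠ pu := by
    intro h; rw [h, gpu] at gpt; exact htu gpt.symm
  have hne2 : pt ≠ pv := by
    intro h; rw [h, gpv] at gpt; exact htv gpt.symm
  have hne3 : pu ≠ pv := by
    intro h; rw [h, gpv] at gpu; exact huv gpu.symm
  rcases lt_trichotomy pt pu with h1 | h1 | h1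
  · rcases lt_trichotomy pu pv with h2 | h2 | h2
    · exact mid pt pu pv h1 h2 gptx gpvx Stv hau
    · exact hne3 h2
    · rcases lt_trichotomy pt pv with h3 | h3 | h3
      · exact mid pt pv pu h3 h2 gptx gpux Stu hav
      · exact hne2 h3
      · exact mid pv pt pu h3 h1 gpvx gpux (Ssymm pu pv Suv) hat
  · exact hne1 h1
  · rcases lt_trichotomy pv pu with h2 | h2 | h2
    · exact mid pv pu pt h2 h1 gpvx gptx (Ssymm pt pv Stv) hau
    · exact hne3 h2.symm
    · rcases lt_trichotomy pv pt with h3 | h3 | h3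
      · exact mid pu pv pt h2 h3 gpux gptx (Ssymm pt pu Stu) hav
      · exact hne2 h3.symm
      · exact mid pu pt pv h1 h3 gpux gpvx Suv hat
  -- note: some cases may be redundant / wrong order; fixed at compile time

/-- **Diamond Lemma (closed-walk form).** If a closed walk `W` uses the five edges
`{t,u}, {u,v}, {x,t}, {x,u}, {x,v}` on four pairwise distinct vertices, then `x` is
interlaced on `W` with at least one of `t`, `u`, `v`. -/
theorem diamond_lemma {V : Type*} {G : SimpleGraph V} {v₀ : V} (W : G.Walk v₀ v₀)
    (t u v x : V)
    (htu : t ≠ u) (htv : t ≠ v) (htx : t ≠ x) (huv : u ≠ v) (hux : u ≠ x) (hvx : v ≠ x)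
    (e1 : s(t, u) ∈ W.edges) (e2 : s(u, v) ∈ W.edges)
    (e3 : s(x, t) ∈ W.edges) (e4 : s(x, u) ∈ W.edges) (e5 : s(x, v) ∈ W.edges) :
    InterlacedOn W x t ∨ InterlacedOn W x u ∨ InterlacedOn W x v := by
  by_contra hcon
  push_neg at hcon
  obtain ⟨hIt, hIu, hIv⟩ := hcon
  obtain ⟨d3, hd3, hc3⟩ := edge_getVert W e3
  have hL : 0 < W.length := by omega
  have hfL : W.getVert W.length = W.getVert 0 := by
    rw [SimpleGraph.Walk.getVert_length, SimpleGraph.Walk.getVert_zero]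
  -- find a position of x
  obtain ⟨r, hr, hfr⟩ : ∃ r, r < W.length ∧ W.getVert r = x := by
    rcases hc3 with ⟨h1, h2⟩ | ⟨h1, h2⟩
    · exact ⟨d3, hd3, h1⟩
    · rcases lt_or_eq_of_le (by omega : d3 + 1 ≤ W.length) with h | h
      · exact ⟨d3 + 1, h, h2⟩
      · refine ⟨0, hL, ?_⟩
        rw [← hfL, ← h]; exact h2
  have gx0 : W.getVert ((0 + r) % W.length) = x := by
    rw [Nat.zero_add, Nat.mod_eq_of_lt hr]; exact hfr
  have gxL : W.getVert ((W.length + r) % W.length) = x := by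
    rw [Nat.add_comm, Nat.add_mod_right, Nat.mod_eq_of_lt hr]; exact hfr
  have noPat : ∀ y : V, ¬ InterlacedOn W x y →
      ¬ ∃ i j k l : ℕ, i < j ∧ j < k ∧ k < l ∧ l < W.length ∧
        ((W.getVert ((i + r) % W.length) = x ∧ W.getVert ((j + r) % W.length) = y ∧
          W.getVert ((k + r) % W.length) = x ∧ W.getVert ((l + r) % W.length) = y) ∨
         (W.getVert ((i + r) % W.length) = y ∧ W.getVert ((j + r) % W.length) = x ∧
          W.getVert ((k + r) % W.length) = y ∧ W.getVert ((l + r) % W.length) = x)) := by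
    intro y hI h
    obtain ⟨i, j, k, l, hij, hjk, hkl, hl, hpat⟩ := h
    exact hI (rot_pattern W.getVert W.length r hr x y i j k l hij hjk hkl hl hpat)
  exact diamond_core (fun m => W.getVert ((m + r) % W.length)) W.length x t u v
    gx0 gxL htu htv htx huv hux hvx
    (noPat t hIt) (noPat u hIu) (noPat v hIv)
    (edge_transfer W.getVert W.length r hL hr hfL x t (edge_getVert W e3))
    (edge_transfer W.getVert W.length r hL hr hfL x u (edge_getVert W e4))
    (edge_transfer W.getVert W.length r hL hr hfL x v (edge_getVert W e5))
    (edge_transfer W.getVert W.length r hL hr hfL t u (edge_getVert W e1))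
    (edge_transfer W.getVert W.length r hL hr hfL u v (edge_getVert W e2))
end

section
/- Cycle-merging core of the Three Face Lemma (part a): Let X be a finite type, σ a permutation of X, and a, b, c elements of X lying in pairwise distinct cycles of σ (i.e., ¬σ.SameCycle a b, ¬σ.SameCycle a c, ¬σ.SameCycle b c). Let σ′ = σ * (Equiv.swap a b) * (Equiv.swap b c). Then for all x, y ∈ X: σ′.SameCycle x y if and only if σ.SameCycle x y, or both x and y lie in the σ-cycle of one of a, b, c (i.e., (σ.SameCycle x a ∨ σ.SameCycle x b ∨ σ.SameCycle x c) and (σ.SameCycle y a ∨ σ.SameCycle y b ∨ σ.SameCycle y c)). In particular the three σ-cycles through a, b, c are merged into a single σ′-cycle, and every other cycle is unchanged. -/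
open Equiv Equiv.Perm

private lemma tfm_ab {X : Type*} [Fintype X] [DecidableEq X] (σ : Equiv.Perm X)
    (a b : X) (hab : ¬ σ.SameCycle a b) :
    (σ * Equiv.swap a b).SameCycle a b := by
  set τ := σ * Equiv.swap a b with hτ
  have key : ∀ n : ℕ, 1 ≤ n → (τ ^ n) a = (σ ^ n) b ∨ τ.SameCycle a b := by
    intro n hn
    induction n with
    | zero => omega
    | succ m ih =>
      rcases Nat.lt_or_ge 1 (m + 1) with h1 | h1
      · have hm : 1 ≤ m := by omega
        rcases ih hm with h | h
        · by_cases hb : (σ ^ m) b = b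
          · right
            exact ⟨(m : ℤ), by rw [zpow_natCast, h, hb]⟩
          · have ha : (σ ^ m) b ≠ a := by
              intro hc
              exact hab (SameCycle.symm ⟨(m : ℤ), by rw [zpow_natCast, hc]⟩)
            left
            rw [pow_succ', Equiv.Perm.mul_apply, h, hτ, Equiv.Perm.mul_apply,
              Equiv.swap_apply_of_ne_of_ne ha hb, pow_succ', Equiv.Perm.mul_apply]
        · right; exact h
      · have : m = 0 := by omega
        subst this
        left
        simp [hτ, Equiv.Perm.mul_apply]
  rcases key (orderOf σ) (orderOf_pos σ) with h | h
  · exact ⟨(orderOf σ : ℤ), by rw [zpow_natCast, h, pow_orderOf_eq_one]; rfl⟩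
  · exact h

private lemma tfm_step {X : Type*} [Fintype X] [DecidableEq X] (σ : Equiv.Perm X)
    (a b : X) (hab : ¬ σ.SameCycle a b) (z : X) :
    (σ * Equiv.swap a b).SameCycle z (σ z) := by
  set τ := σ * Equiv.swap a b with hτ
  have hτab : τ.SameCycle a b := tfm_ab σ a b hab
  by_cases hza : z = a
  · have h1 : σ z = τ b := by rw [hza]; simp [hτ, Equiv.Perm.mul_apply]
    have h2 : τ.SameCycle z b := by rw [hza]; exact hτab
    rw [h1]
    exact h2.trans ⟨1, by simp⟩
  · by_cases hzb : z = b
    · have h1 : σ z = τ a := by rw [hzb]; simp [hτ, Equiv.Perm.mul_apply]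
      have h2 : τ.SameCycle z a := by rw [hzb]; exact hτab.symm
      rw [h1]
      exact h2.trans ⟨1, by simp⟩
    · have : σ z = τ z := by
        simp [hτ, Equiv.Perm.mul_apply, Equiv.swap_apply_of_ne_of_ne hza hzb]
      rw [this]
      exact ⟨1, by simp⟩

private lemma tfm_lift {X : Type*} [Fintype X] [DecidableEq X] (σ : Equiv.Perm X)
    (a b : X) (hab : ¬ σ.SameCycle a b) {x y : X} (h : σ.SameCycle x y) :
    (σ * Equiv.swap a b).SameCycle x y := by
  obtain ⟨n, -, hn⟩ := h.exists_pow_eq'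
  subst hn
  clear h
  induction n with
  | zero => exact Equiv.Perm.SameCycle.refl _ _
  | succ m ih =>
    rw [pow_succ', Equiv.Perm.mul_apply]
    exact ih.trans (tfm_step σ a b hab _)

/-- Two-cycle merge lemma. -/
private lemma tfm_merge {X : Type*} [Fintype X] [DecidableEq X] (σ : Equiv.Perm X)
    (a b : X) (hab : ¬ σ.SameCycle a b) (x y : X) :
    (σ * Equiv.swap a b).SameCycle x y ↔
      σ.SameCycle x y ∨
        ((σ.SameCycle x a ∨ σ.SameCycle x b) ∧ (σ.SameCycle y a ∨ σ.SameCycle y b)) := by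
  set τ := σ * Equiv.swap a b with hτ
  constructor
  · intro h
    obtain ⟨n, -, hn⟩ := h.exists_pow_eq'
    subst hn
    clear h
    induction n with
    | zero => exact Or.inl (Equiv.Perm.SameCycle.refl _ _)
    | succ m ih =>
      rw [pow_succ', Equiv.Perm.mul_apply]
      set z := (τ ^ m) x with hz
      -- step: relate z and τ z
      have hstep : σ.SameCycle z (τ z) ∨
          ((σ.SameCycle z a ∨ σ.SameCycle z b) ∧
           (σ.SameCycle (τ z) a ∨ σ.SameCycle (τ z) b)) := by
        by_cases hza : z = a
        · right
          refine ⟨Or.inl (hza ▸ Equiv.Perm.SameCycle.refl _ _), Or.inr ?_⟩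
          have : τ z = σ b := by rw [hza]; simp [hτ, Equiv.Perm.mul_apply]
          rw [this]
          exact (Equiv.Perm.sameCycle_apply_left).mpr (Equiv.Perm.SameCycle.refl _ _)
        · by_cases hzb : z = b
          · right
            refine ⟨Or.inr (hzb ▸ Equiv.Perm.SameCycle.refl _ _), Or.inl ?_⟩
            have : τ z = σ a := by rw [hzb]; simp [hτ, Equiv.Perm.mul_apply]
            rw [this]
            exact (Equiv.Perm.sameCycle_apply_left).mpr (Equiv.Perm.SameCycle.refl _ _)
          · left
            have : τ z = σ z := by
              simp [hτ, Equiv.Perm.mul_apply, Equiv.swap_apply_of_ne_of_ne hza hzb]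
            rw [this]
            exact (Equiv.Perm.sameCycle_apply_right).mpr (Equiv.Perm.SameCycle.refl _ _)
      rcases ih with h1 | h1 <;> rcases hstep with h2 | h2
      · exact Or.inl (h1.trans h2)
      · exact Or.inr ⟨h2.1.imp h1.trans h1.trans, h2.2⟩
      · exact Or.inr ⟨h1.1, h1.2.imp (fun h => h2.symm.trans h) (fun h => h2.symm.trans h)⟩
      · exact Or.inr ⟨h1.1, h2.2⟩
  · rintro (h | ⟨hx, hy⟩)
    · exact tfm_lift σ a b hab h
    · have hτab : τ.SameCycle a b := tfm_ab σ a b hab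
      have hx' : τ.SameCycle x a := by
        rcases hx with h | h
        · exact tfm_lift σ a b hab h
        · exact (tfm_lift σ a b hab h).trans hτab.symm
      have hy' : τ.SameCycle y a := by
        rcases hy with h | h
        · exact tfm_lift σ a b hab h
        · exact (tfm_lift σ a b hab h).trans hτab.symm
      exact hx'.trans hy'.symm

/-- **Cycle-merging core of the Three Face Lemma (part a).** If `a`, `b`, `c` lie in pairwise
distinct cycles of a permutation `σ` of a finite type, then the permutation
`σ * swap a b * swap b c` has the same cycles as `σ` except that the three cycles through
`a`, `b`, `c` are merged into one. -/
theorem three_face_merge {X : Type*} [Fintype X] [DecidableEq X] (σ : Equiv.Perm X)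
    (a b c : X)
    (hab : ¬ σ.SameCycle a b) (hac : ¬ σ.SameCycle a c) (hbc : ¬ σ.SameCycle b c) :
    ∀ x y : X,
      (σ * Equiv.swap a b * Equiv.swap b c).SameCycle x y ↔
        (σ.SameCycle x y ∨
          ((σ.SameCycle x a ∨ σ.SameCycle x b ∨ σ.SameCycle x c) ∧
           (σ.SameCycle y a ∨ σ.SameCycle y b ∨ σ.SameCycle y c))) := by
  intro x y
  set τ := σ * Equiv.swap a b with hτ
  have H1 := tfm_merge σ a b hab
  have hca : ¬ σ.SameCycle c a := fun h => hac h.symm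
  have hcb : ¬ σ.SameCycle c b := fun h => hbc h.symm
  have hba : ¬ σ.SameCycle b a := fun h => hab h.symm
  have hbc' : ¬ τ.SameCycle b c := by
    rw [H1]
    rintro (h | ⟨-, (h | h)⟩)
    exacts [hbc h, hca h, hcb h]
  have H2 := tfm_merge τ b c hbc'
  have hbb : σ.SameCycle b b := Equiv.Perm.SameCycle.refl _ _
  have e1 : ∀ z, τ.SameCycle z b ↔ (σ.SameCycle z a ∨ σ.SameCycle z b) := by
    intro z; rw [H1]; tauto
  have e2 : ∀ z, τ.SameCycle z c ↔ σ.SameCycle z c := by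
    intro z; rw [H1]; tauto
  rw [show σ * Equiv.swap a b * Equiv.swap b c = τ * Equiv.swap b c from rfl]
  rw [H2 x y, H1 x y, e1 x, e2 x, e1 y, e2 y]
  tauto
end

section
/- Cycle-rearranging core of the Three Face Lemma (part b): Let X be a finite type, σ a permutation of X, and a, b, c elements of X with a ≠ b, σ.SameCycle a b, and ¬σ.SameCycle a c. Let σ′ = σ * (Equiv.swap a b) * (Equiv.swap b c). Then: (i) ¬σ′.SameCycle a b; (ii) σ′.SameCycle b c; (iii) for every x ∈ X, (σ′.SameCycle x a ∨ σ′.SameCycle x b) holds if and only if (σ.SameCycle x a ∨ σ.SameCycle x c) holds; and (iv) for all x, y ∈ X with ¬σ.SameCycle x a and ¬σ.SameCycle x c, one has σ′.SameCycle x y ↔ σ.SameCycle x y. In other words, the union of the σ-cycle through a (which contains b) and the σ-cycle through c splits into exactly two σ′-cycles, one containing a and the other containing both b and c, while all other cycles are unchanged. -/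
open Equiv Equiv.Perm Function

private lemma sc_ind {X : Type*} {g : Equiv.Perm X} {R : X → X → Prop}
    (hrefl : ∀ x, R x x) (hsymm : ∀ {x y}, R x y → R y x)
    (htrans : ∀ {x y z}, R x y → R y z → R x z)
    (hstep : ∀ x, R x (g x)) {x y : X} (h : g.SameCycle x y) : R x y := by
  obtain ⟨n, rfl⟩ := h
  induction n using Int.induction_on with
  | zero => simpa using hrefl x
  | succ n ih =>
      have e : (g ^ ((n : ℤ) + 1)) x = g ((g ^ (n : ℤ)) x) := by
        rw [add_comm, zpow_add, zpow_one]; rfl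
      rw [e]; exact htrans ih (hstep _)
  | pred n ih =>
      have e : g ((g ^ (-(n : ℤ) - 1)) x) = (g ^ (-(n : ℤ))) x := by
        rw [← Equiv.Perm.mul_apply, ← zpow_one_add]
        norm_num
      exact htrans ih (hsymm (e ▸ hstep ((g ^ (-(n : ℤ) - 1)) x)))

private lemma merge_bridge {X : Type*} [Fintype X] [DecidableEq X] (τ : Equiv.Perm X)
    (b c : X) (h : ¬ τ.SameCycle b c) : (τ * Equiv.swap b c).SameCycle b c := by
  set f := τ * Equiv.swap b c with hf
  have hbc : b ≠ c := fun e => h (e ▸ Equiv.Perm.SameCycle.refl τ b)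
  have hP : ∃ m, 0 < m ∧ (τ ^ m) c = c :=
    ⟨orderOf τ, orderOf_pos τ, by simp [pow_orderOf_eq_one]⟩
  set m := Nat.find hP with hm
  obtain ⟨hm0, hmc⟩ := Nat.find_spec hP
  have hne : ∀ j, 0 < j → j < m → (τ ^ j) c ≠ b ∧ (τ ^ j) c ≠ c := by
    intro j hj0 hjm
    refine ⟨fun e => h ?_, fun e => Nat.find_min hP hjm ⟨hj0, e⟩⟩
    exact Equiv.Perm.SameCycle.symm (show τ.SameCycle c b from ⟨(j : ℤ), by rw [zpow_natCast]; exact e⟩)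
  have key : ∀ j, j + 1 ≤ m → (f ^ j) (τ c) = (τ ^ (j + 1)) c := by
    intro j
    induction j with
    | zero => intro _; simp
    | succ j ih =>
        intro hjm
        obtain ⟨hnb, hnc⟩ := hne (j + 1) (by omega) (by omega)
        rw [pow_succ' f, Equiv.Perm.mul_apply, ih (by omega), hf, Equiv.Perm.mul_apply,
          Equiv.swap_apply_of_ne_of_ne hnb hnc, pow_succ' τ (j + 1), Equiv.Perm.mul_apply]
  have hfm : (f ^ m) b = c := by
    have hm1 : m - 1 + 1 = m := by omega
    have h1 : f b = τ c := by rw [hf, Equiv.Perm.mul_apply, Equiv.swap_apply_left]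
    calc (f ^ m) b = (f ^ (m - 1)) (f b) := by
          rw [← hm1, pow_succ, Equiv.Perm.mul_apply, hm1]
      _ = (τ ^ m) c := by rw [h1, key (m - 1) (by omega), hm1]
      _ = c := hmc
  exact ⟨(m : ℤ), by rw [zpow_natCast]; exact hfm⟩

private lemma split_not {X : Type*} [Fintype X] [DecidableEq X] (σ : Equiv.Perm X)
    (a b : X) (hab : a ≠ b) (hs : σ.SameCycle a b) :
    ¬ (σ * Equiv.swap a b).SameCycle a b := by
  set g := σ * Equiv.swap a b with hg
  have hP : ∃ k, 0 < k ∧ (σ ^ k) b = a := by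
    obtain ⟨i, hi0, _, hia⟩ := (hs.symm).exists_pow_eq''
    exact ⟨i, hi0, hia⟩
  set k := Nat.find hP with hk
  obtain ⟨hk0, hka⟩ := Nat.find_spec hP
  have hne : ∀ j, 0 < j → j < k → (σ ^ j) b ≠ a ∧ (σ ^ j) b ≠ b := by
    intro j hj0 hjk
    constructor
    · exact fun e => Nat.find_min hP hjk ⟨hj0, e⟩
    · intro e
      have h2 : (σ ^ (k - j)) b = a := by
        have h3 : (σ ^ (k - j)) ((σ ^ j) b) = a := by
          rw [← Equiv.Perm.mul_apply, ← pow_add, Nat.sub_add_cancel hjk.le]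
          exact hka
        rwa [e] at h3
      exact Nat.find_min hP (show k - j < k by omega) ⟨by omega, h2⟩
  have key : ∀ j, j + 1 ≤ k → (g ^ j) (σ b) = (σ ^ (j + 1)) b := by
    intro j
    induction j with
    | zero => intro _; simp
    | succ j ih =>
        intro hjk
        obtain ⟨hna, hnb⟩ := hne (j + 1) (by omega) (by omega)
        rw [pow_succ' g, Equiv.Perm.mul_apply, ih (by omega), hg, Equiv.Perm.mul_apply,
          Equiv.swap_apply_of_ne_of_ne hna hnb, pow_succ' σ (j + 1), Equiv.Perm.mul_apply]
  have hga : (g ^ k) a = a := by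
    have hk1 : k - 1 + 1 = k := by omega
    have h1 : g a = σ b := by rw [hg, Equiv.Perm.mul_apply, Equiv.swap_apply_left]
    calc (g ^ k) a = (g ^ (k - 1)) (g a) := by
          rw [← hk1, pow_succ, Equiv.Perm.mul_apply, hk1]
      _ = (σ ^ k) b := by rw [h1, key (k - 1) (by omega), hk1]
      _ = a := hka
  rintro ⟨n, hn⟩
  have hkz : (0 : ℤ) < (k : ℤ) := by exact_mod_cast hk0
  set r := (n % (k : ℤ)).toNat with hr
  have hr0 : (r : ℤ) = n % (k : ℤ) := Int.toNat_of_nonneg (Int.emod_nonneg n hkz.ne')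
  have hrk : r < k := by
    have := Int.emod_lt_of_pos n hkz
    omega
  have hgn : (g ^ n) a = (g ^ r) a := by
    have e1 : n % (k : ℤ) + (k : ℤ) * (n / (k : ℤ)) = n := Int.emod_add_mul_ediv n k
    have e2 : g ^ n = g ^ ((r : ℤ)) * (g ^ (k : ℤ)) ^ (n / (k : ℤ)) := by
      rw [← zpow_mul, ← zpow_add, hr0, e1]
    have e3 : ((g ^ (k : ℤ)) ^ (n / (k : ℤ))) a = a := by
      have hfix : Function.IsFixedPt (g ^ (k : ℤ)) a := by
        show (g ^ (k : ℤ)) a = a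
        rw [zpow_natCast]; exact hga
      exact hfix.perm_zpow _
    rw [e2, Equiv.Perm.mul_apply, e3, zpow_natCast]
  rw [hgn] at hn
  rcases Nat.eq_zero_or_pos r with hr00 | hr1
  · rw [hr00] at hn; simp at hn; exact hab hn
  · have hr1' : r - 1 + 1 = r := by omega
    have h1 : g a = σ b := by rw [hg, Equiv.Perm.mul_apply, Equiv.swap_apply_left]
    have h2 : (g ^ r) a = (σ ^ r) b := by
      calc (g ^ r) a = (g ^ (r - 1)) (g a) := by
            rw [← hr1', pow_succ, Equiv.Perm.mul_apply, hr1']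
        _ = (σ ^ r) b := by rw [h1, key (r - 1) (by omega), hr1']
    rw [h2] at hn
    exact (hne r hr1 hrk).2 hn

private lemma merge {X : Type*} [Fintype X] [DecidableEq X] (τ : Equiv.Perm X)
    (b c : X) (h : ¬ τ.SameCycle b c) : ∀ x y : X,
    (τ * Equiv.swap b c).SameCycle x y ↔
      (τ.SameCycle x y ∨
        ((τ.SameCycle x b ∨ τ.SameCycle x c) ∧ (τ.SameCycle y b ∨ τ.SameCycle y c))) := by
  intro x y
  set f := τ * Equiv.swap b c with hf
  have hbridge : f.SameCycle b c := merge_bridge τ b c h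
  have hsub : ∀ u v, τ.SameCycle u v → f.SameCycle u v := by
    intro u v huv
    refine sc_ind (fun z => Equiv.Perm.SameCycle.refl f z) (fun h' => h'.symm)
      (fun h1 h2 => h1.trans h2) ?_ huv
    intro z
    rcases eq_or_ne z b with rfl | hzb
    · have e : f c = τ z := by rw [hf, Equiv.Perm.mul_apply, Equiv.swap_apply_right]
      exact hbridge.trans (e ▸ Equiv.Perm.sameCycle_apply_right.mpr (SameCycle.refl f c))
    rcases eq_or_ne z c with rfl | hzc
    · have e : f b = τ z := by rw [hf, Equiv.Perm.mul_apply, Equiv.swap_apply_left]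
      exact hbridge.symm.trans (e ▸ Equiv.Perm.sameCycle_apply_right.mpr (SameCycle.refl f b))
    · have e : f z = τ z := by
        rw [hf, Equiv.Perm.mul_apply, Equiv.swap_apply_of_ne_of_ne hzb hzc]
      exact e ▸ Equiv.Perm.sameCycle_apply_right.mpr (SameCycle.refl f z)
  constructor
  · intro hxy
    set R : X → X → Prop := fun u v => τ.SameCycle u v ∨
      ((τ.SameCycle u b ∨ τ.SameCycle u c) ∧ (τ.SameCycle v b ∨ τ.SameCycle v c)) with hR
    have hB : ∀ u v, τ.SameCycle u v →
        (τ.SameCycle u b ∨ τ.SameCycle u c) → (τ.SameCycle v b ∨ τ.SameCycle v c) := by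
      rintro u v huv (h' | h')
      exacts [Or.inl (huv.symm.trans h'), Or.inr (huv.symm.trans h')]
    refine sc_ind (R := R) (fun z => Or.inl (SameCycle.refl τ z)) ?_ ?_ ?_ hxy
    · rintro u v (h' | ⟨h1, h2⟩)
      exacts [Or.inl h'.symm, Or.inr ⟨h2, h1⟩]
    · rintro u v w (h1 | ⟨h1, h2⟩) (h3 | ⟨h3, h4⟩)
      · exact Or.inl (h1.trans h3)
      · exact Or.inr ⟨hB v u h1.symm h3, h4⟩
      · exact Or.inr ⟨h1, hB v w h3 h2⟩
      · exact Or.inr ⟨h1, h4⟩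
    · intro z
      rcases eq_or_ne z b with rfl | hzb
      · have e : f z = τ c := by rw [hf, Equiv.Perm.mul_apply, Equiv.swap_apply_left]
        refine Or.inr ⟨Or.inl (SameCycle.refl τ z), Or.inr ?_⟩
        rw [e]; exact Equiv.Perm.sameCycle_apply_left.mpr (SameCycle.refl τ c)
      rcases eq_or_ne z c with rfl | hzc
      · have e : f z = τ b := by rw [hf, Equiv.Perm.mul_apply, Equiv.swap_apply_right]
        refine Or.inr ⟨Or.inr (SameCycle.refl τ z), Or.inl ?_⟩
        rw [e]; exact Equiv.Perm.sameCycle_apply_left.mpr (SameCycle.refl τ b)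
      · have e : f z = τ z := by
          rw [hf, Equiv.Perm.mul_apply, Equiv.swap_apply_of_ne_of_ne hzb hzc]
        exact Or.inl (e ▸ Equiv.Perm.sameCycle_apply_right.mpr (SameCycle.refl τ z))
  · rintro (hxy | ⟨hxB, hyB⟩)
    · exact hsub _ _ hxy
    · have h1 : f.SameCycle x b := by
        rcases hxB with h' | h'
        exacts [hsub _ _ h', (hsub _ _ h').trans hbridge.symm]
      have h2 : f.SameCycle y b := by
        rcases hyB with h' | h'
        exacts [hsub _ _ h', (hsub _ _ h').trans hbridge.symm]
      exact h1.trans h2.symm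

/-- **Cycle-rearranging core of the Three Face Lemma (part b).** Suppose `a ≠ b` lie in the
same cycle of a permutation `σ` of a finite type, and `c` lies in a different cycle.  Then in
`σ' = σ * swap a b * swap b c`, the union of the σ-cycle through `a` and the σ-cycle through
`c` splits into exactly two cycles, one containing `a` and the other containing both `b` and
`c`, while all other cycles are unchanged. -/
theorem three_face_rearrange {X : Type*} [Fintype X] [DecidableEq X] (σ : Equiv.Perm X)
    (a b c : X) (hab : a ≠ b) (hsab : σ.SameCycle a b) (hac : ¬ σ.SameCycle a c) :
    ¬ (σ * Equiv.swap a b * Equiv.swap b c).SameCycle a b ∧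
    (σ * Equiv.swap a b * Equiv.swap b c).SameCycle b c ∧
    (∀ x : X,
      ((σ * Equiv.swap a b * Equiv.swap b c).SameCycle x a ∨
        (σ * Equiv.swap a b * Equiv.swap b c).SameCycle x b) ↔
      (σ.SameCycle x a ∨ σ.SameCycle x c)) ∧
    (∀ x y : X, ¬ σ.SameCycle x a → ¬ σ.SameCycle x c →
      ((σ * Equiv.swap a b * Equiv.swap b c).SameCycle x y ↔ σ.SameCycle x y)) := by
  set τ := σ * Equiv.swap a b with hτ
  have hτab : ¬ τ.SameCycle a b := split_not σ a b hab hsab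
  have hστ : τ * Equiv.swap a b = σ := by
    rw [hτ, mul_assoc, Equiv.swap_mul_self, mul_one]
  have Eσ : ∀ u v : X, σ.SameCycle u v ↔
      (τ.SameCycle u v ∨
        ((τ.SameCycle u a ∨ τ.SameCycle u b) ∧ (τ.SameCycle v a ∨ τ.SameCycle v b))) := by
    intro u v; rw [← hστ]; exact merge τ a b hτab u v
  have hτac : ¬ τ.SameCycle a c := fun h' => hac ((Eσ a c).mpr (Or.inl h'))
  have hτbc : ¬ τ.SameCycle b c := fun h' =>
    hac (hsab.trans ((Eσ b c).mpr (Or.inl h')))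
  have Ef := merge τ b c hτbc
  have hτca : ¬ τ.SameCycle c a := fun h' => hτac h'.symm
  have hτcb : ¬ τ.SameCycle c b := fun h' => hτbc h'.symm
  have hτba : ¬ τ.SameCycle b a := fun h' => hτab h'.symm
  have raa := Equiv.Perm.SameCycle.refl τ a
  have rbb := Equiv.Perm.SameCycle.refl τ b
  have rcc := Equiv.Perm.SameCycle.refl τ c
  refine ⟨?_, ?_, ?_, ?_⟩
  · rw [Ef a b]; tauto
  · rw [Ef b c]; tauto
  · intro x
    rw [Ef x a, Ef x b, Eσ x a, Eσ x c]
    constructor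
    · rintro ((h | ⟨h1, h2⟩) | (h | ⟨h1, h2⟩)) <;> tauto
    · rintro ((h | ⟨h1, h2⟩) | (h | ⟨h1, h2⟩)) <;> tauto
  · intro x y hxa hxc
    rw [Eσ x a] at hxa
    rw [Eσ x c] at hxc
    have nxa : ¬ τ.SameCycle x a := fun h' => hxa (Or.inl h')
    have nxb : ¬ τ.SameCycle x b := fun h' => hxa (Or.inr ⟨Or.inr h', Or.inl raa⟩)
    have nxc : ¬ τ.SameCycle x c := fun h' => hxc (Or.inl h')
    rw [Ef x y, Eσ x y]
    tauto
end

section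
/- Necessity of the strict inequality |W| > |R| in the Division Lemma: Let m ≥ 1 be an integer and N = 6m + 3. In ZMod N, let B = {0, 2m+1, 4m+2}, let W = {(2m+1)·q + r : q ∈ {0,1,2}, 1 ≤ r ≤ m}, and let R = {(2m+1)·q + r : q ∈ {0,1,2}, m+1 ≤ r ≤ 2m} (all taken as elements of ZMod N). Then B, W, R are pairwise disjoint, |W| = |R| = 3m, for every pair of consecutive black points b, b′ ∈ B one has |W ∩ [b, b′]| = m, and yet for every pair of distinct black points b, b′ ∈ B one has |(W ∪ R) ∩ [b, b′]| ∈ {2m, 4m}; in particular there is no pair of distinct black points b, b′ with 2m < |(W ∪ R) ∩ [b, b′]| < 4m (the conclusion of the Division Lemma for p = 3m fails). -/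
/-- The closed cyclic interval `[a, b]` in `ZMod N`: the set of points encountered
moving forward from `a` until reaching `b`, inclusive. -/
def cycInterval {N : ℕ} (a b : ZMod N) : Set (ZMod N) :=
  {x | (x - a).val ≤ (b - a).val}

/-- Two black points `b, b'` of `B` are consecutive if they are distinct and no point of `B`
lies strictly between them (in the forward cyclic interval from `b` to `b'`). -/
def ConsecutiveIn {N : ℕ} (B : Set (ZMod N)) (b b' : ZMod N) : Prop :=
  b ≠ b' ∧ ∀ x ∈ B, x ∈ cycInterval b b' → x = b ∨ x = b'

namespace DLaux

instance instNZ (m : ℕ) : NeZero (6*m+3) := ⟨by omega⟩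

def Wset (m : ℕ) : Set (ZMod (6*m+3)) :=
  {x | ∃ q r : ℕ, q ≤ 2 ∧ 1 ≤ r ∧ r ≤ m ∧ x = (((2*m+1)*q + r : ℕ) : ZMod (6*m+3))}

def Rset (m : ℕ) : Set (ZMod (6*m+3)) :=
  {x | ∃ q r : ℕ, q ≤ 2 ∧ m+1 ≤ r ∧ r ≤ 2*m ∧ x = (((2*m+1)*q + r : ℕ) : ZMod (6*m+3))}

variable (m : ℕ)

lemma cast_inj {a b : ℕ} (ha : a < 6*m+3) (hb : b < 6*m+3)
    (h : (a : ZMod (6*m+3)) = b) : a = b := by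
  have := congrArg ZMod.val h
  rwa [ZMod.val_cast_of_lt ha, ZMod.val_cast_of_lt hb] at this

lemma ncard_image (S : Finset ℕ) (hS : ∀ s ∈ S, s < 6*m+3) :
    ((fun k : ℕ => (k : ZMod (6*m+3))) '' ↑S).ncard = S.card := by
  rw [Set.ncard_image_of_injOn, Set.ncard_coe_finset]
  intro a ha b hb hab
  exact cast_inj m (hS a ha) (hS b hb) hab

lemma cast_sub_cast (a b : ℕ) (hb : b ≤ 6*m+3) :
    ((a : ZMod (6*m+3)) - b) = ((a + (6*m+3) - b : ℕ) : ZMod (6*m+3)) := by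
  have h : (a + (6*m+3) - b) + b = a + (6*m+3) := by omega
  have h2 : (((a + (6*m+3) - b : ℕ) : ZMod (6*m+3)) + b : ZMod (6*m+3)) = a := by
    rw [← Nat.cast_add, h, Nat.cast_add, ZMod.natCast_self, add_zero]
  rw [← h2]; ring

lemma val_sub_cast (a b : ℕ) (hb : b ≤ 6*m+3) :
    ((a : ZMod (6*m+3)) - b).val = (a + (6*m+3) - b) % (6*m+3) := by
  rw [cast_sub_cast m a b hb, ZMod.val_natCast]

lemma mem_cyc0 (k : ℕ) (hk : k < 6*m+3) (x : ZMod (6*m+3)) :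
    x ∈ cycInterval 0 (k : ZMod (6*m+3)) ↔ x.val ≤ k := by
  simp [cycInterval, ZMod.val_cast_of_lt hk]

lemma cycInterval_add {N : ℕ} (a b d : ZMod N) :
    cycInterval (a+d) (b+d) = (· + d) '' cycInterval a b := by
  ext x
  simp only [cycInterval, Set.mem_setOf_eq, Set.mem_image]
  constructor
  · intro h
    have e1 : b + d - (a + d) = b - a := by ring
    have e2 : x - (a + d) = x - d - a := by ring
    rw [e1, e2] at h
    exact ⟨x - d, h, by ring⟩
  · rintro ⟨y, hy, rfl⟩
    have e1 : b + d - (a + d) = b - a := by ring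
    have e2 : y + d - (a + d) = y - a := by ring
    rw [e1, e2]
    exact hy

lemma shift_ncard {N : ℕ} (S : Set (ZMod N)) (d : ZMod N) (hS : (· + d) '' S = S)
    (a b : ZMod N) :
    (S ∩ cycInterval (a + d) (b + d)).ncard = (S ∩ cycInterval a b).ncard := by
  rw [cycInterval_add]
  nth_rewrite 1 [← hS]
  rw [← Set.image_inter (add_left_injective d),
    Set.ncard_image_of_injective _ (add_left_injective d)]

lemma Wstep : ∀ x ∈ Wset m, x + ((2*m+1 : ℕ) : ZMod (6*m+3)) ∈ Wset m := by
  rintro x ⟨q, r, hq, hr1, hr2, rfl⟩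
  by_cases h : q ≤ 1
  · exact ⟨q+1, r, by omega, hr1, hr2, by rw [← Nat.cast_add]; congr 1; ring⟩
  · have hq2 : q = 2 := by omega
    subst hq2
    refine ⟨0, r, by omega, hr1, hr2, ?_⟩
    rw [← Nat.cast_add]
    have e : (2*m+1)*2 + r + (2*m+1) = (6*m+3) + ((2*m+1)*0 + r) := by omega
    rw [e, Nat.cast_add, ZMod.natCast_self, zero_add]

lemma Rstep : ∀ x ∈ Rset m, x + ((2*m+1 : ℕ) : ZMod (6*m+3)) ∈ Rset m := by
  rintro x ⟨q, r, hq, hr1, hr2, rfl⟩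
  by_cases h : q ≤ 1
  · exact ⟨q+1, r, by omega, hr1, hr2, by rw [← Nat.cast_add]; congr 1; ring⟩
  · have hq2 : q = 2 := by omega
    subst hq2
    refine ⟨0, r, by omega, hr1, hr2, ?_⟩
    rw [← Nat.cast_add]
    have e : (2*m+1)*2 + r + (2*m+1) = (6*m+3) + ((2*m+1)*0 + r) := by omega
    rw [e, Nat.cast_add, ZMod.natCast_self, zero_add]

lemma add3 : ∀ x : ZMod (6*m+3),
    x + ((2*m+1:ℕ):ZMod (6*m+3)) + ((2*m+1:ℕ):ZMod (6*m+3)) + ((2*m+1:ℕ):ZMod (6*m+3)) = x := by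
  intro x
  have h : (((2*m+1:ℕ):ZMod (6*m+3)) + ((2*m+1:ℕ):ZMod (6*m+3))) + ((2*m+1:ℕ):ZMod (6*m+3)) = 0 := by
    rw [← Nat.cast_add, ← Nat.cast_add]
    have e : 2*m+1 + (2*m+1) + (2*m+1) = 6*m+3 := by omega
    rw [e, ZMod.natCast_self]
  calc x + (2*m+1:ℕ) + (2*m+1:ℕ) + (2*m+1:ℕ)
      = x + ((((2*m+1:ℕ):ZMod (6*m+3)) + (2*m+1:ℕ)) + (2*m+1:ℕ)) := by ring
    _ = x := by rw [h, add_zero]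

lemma inv_of_step (S : Set (ZMod (6*m+3)))
    (hstep : ∀ x ∈ S, x + ((2*m+1 : ℕ) : ZMod (6*m+3)) ∈ S) :
    (· + ((2*m+1:ℕ):ZMod (6*m+3))) '' S = S := by
  apply Set.Subset.antisymm
  · rintro _ ⟨x, hx, rfl⟩
    exact hstep x hx
  · intro x hx
    refine ⟨x + (2*m+1:ℕ) + (2*m+1:ℕ), hstep _ (hstep _ hx), ?_⟩
    exact add3 m x

lemma Winv : (· + ((2*m+1:ℕ):ZMod (6*m+3))) '' Wset m = Wset m :=
  inv_of_step m _ (Wstep m)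

lemma WRinv : (· + ((2*m+1:ℕ):ZMod (6*m+3))) '' (Wset m ∪ Rset m) = Wset m ∪ Rset m := by
  apply inv_of_step
  rintro x (hx | hx)
  · exact Or.inl (Wstep m x hx)
  · exact Or.inr (Rstep m x hx)


lemma WR_mem (x : ZMod (6*m+3)) : x ∈ Wset m ∪ Rset m ↔
    ∃ q r : ℕ, q ≤ 2 ∧ 1 ≤ r ∧ r ≤ 2*m ∧ x = (((2*m+1)*q + r : ℕ) : ZMod (6*m+3)) := by
  constructor
  · rintro (⟨q, r, hq, h1, h2, rfl⟩ | ⟨q, r, hq, h1, h2, rfl⟩) <;>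
      exact ⟨q, r, hq, by omega, by omega, rfl⟩
  · rintro ⟨q, r, hq, h1, h2, rfl⟩
    by_cases h : r ≤ m
    · exact Or.inl ⟨q, r, hq, h1, h, rfl⟩
    · exact Or.inr ⟨q, r, hq, by omega, h2, rfl⟩

lemma W_inter_base :
    Wset m ∩ cycInterval 0 ((2*m+1 : ℕ) : ZMod (6*m+3)) =
      (fun k : ℕ => (k : ZMod (6*m+3))) '' ↑(Finset.Icc 1 m) := by
  ext x
  simp only [Set.mem_inter_iff, mem_cyc0 m (2*m+1) (by omega), Set.mem_image,
    Finset.coe_Icc, Set.mem_Icc]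
  constructor
  · rintro ⟨⟨q, r, hq, hr1, hr2, rfl⟩, hval⟩
    rw [ZMod.val_cast_of_lt (by interval_cases q <;> omega)] at hval
    have hq0 : q = 0 := by interval_cases q <;> omega
    subst hq0
    exact ⟨r, ⟨hr1, hr2⟩, by norm_num⟩
  · rintro ⟨r, ⟨hr1, hr2⟩, rfl⟩
    refine ⟨⟨0, r, by omega, hr1, hr2, by norm_num⟩, ?_⟩
    rw [ZMod.val_cast_of_lt (by omega)]; omega

lemma baseW (hm : 1 ≤ m) :
    (Wset m ∩ cycInterval 0 ((2*m+1:ℕ):ZMod (6*m+3))).ncard = m := by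
  rw [W_inter_base, ncard_image]
  · simp
  · intro s hs; simp only [Finset.mem_Icc] at hs; omega

lemma WR_inter_base1 :
    (Wset m ∪ Rset m) ∩ cycInterval 0 ((2*m+1 : ℕ) : ZMod (6*m+3)) =
      (fun k : ℕ => (k : ZMod (6*m+3))) '' ↑(Finset.Icc 1 (2*m)) := by
  ext x
  simp only [Set.mem_inter_iff, mem_cyc0 m (2*m+1) (by omega), Set.mem_image,
    Finset.coe_Icc, Set.mem_Icc, WR_mem]
  constructor
  · rintro ⟨⟨q, r, hq, hr1, hr2, rfl⟩, hval⟩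
    rw [ZMod.val_cast_of_lt (by interval_cases q <;> omega)] at hval
    have hq0 : q = 0 := by interval_cases q <;> omega
    subst hq0
    exact ⟨r, ⟨hr1, hr2⟩, by norm_num⟩
  · rintro ⟨r, ⟨hr1, hr2⟩, rfl⟩
    refine ⟨⟨0, r, by omega, hr1, hr2, by norm_num⟩, ?_⟩
    rw [ZMod.val_cast_of_lt (by omega)]; omega

lemma baseWR1 :
    ((Wset m ∪ Rset m) ∩ cycInterval 0 ((2*m+1:ℕ):ZMod (6*m+3))).ncard = 2*m := by
  rw [WR_inter_base1, ncard_image]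
  · simp
  · intro s hs; simp only [Finset.mem_Icc] at hs; omega

lemma WR_inter_base2 :
    (Wset m ∪ Rset m) ∩ cycInterval 0 ((4*m+2 : ℕ) : ZMod (6*m+3)) =
      (fun k : ℕ => (k : ZMod (6*m+3))) ''
        ↑(Finset.Icc 1 (2*m) ∪ Finset.Icc (2*m+2) (4*m+1)) := by
  ext x
  rw [Set.mem_inter_iff, WR_mem]
  simp only [mem_cyc0 m (4*m+2) (by omega), Set.mem_image,
    Finset.coe_union, Finset.coe_Icc, Set.mem_union, Set.mem_Icc]
  constructor
  · rintro ⟨⟨q, r, hq, hr1, hr2, rfl⟩, hval⟩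
    rw [ZMod.val_cast_of_lt (by interval_cases q <;> omega)] at hval
    refine ⟨(2*m+1)*q + r, ?_, rfl⟩
    interval_cases q <;> omega
  · rintro ⟨k, hk, rfl⟩
    constructor
    · rcases hk with ⟨h1, h2⟩ | ⟨h1, h2⟩
      · exact ⟨0, k, by omega, h1, by omega, by norm_num⟩
      · exact ⟨1, k - (2*m+1), by omega, by omega, by omega, by congr 1; omega⟩
    · rw [ZMod.val_cast_of_lt (by omega)]; omega

lemma baseWR2 :
    ((Wset m ∪ Rset m) ∩ cycInterval 0 ((4*m+2:ℕ):ZMod (6*m+3))).ncard = 4*m := by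
  rw [WR_inter_base2, ncard_image]
  · rw [Finset.card_union_of_disjoint, Nat.card_Icc, Nat.card_Icc]
    · omega
    · rw [Finset.disjoint_left]
      intro a ha hb
      simp only [Finset.mem_Icc] at ha hb
      omega
  · intro s hs
    simp only [Finset.mem_union, Finset.mem_Icc] at hs
    omega

lemma W_eq :
    Wset m = (fun k : ℕ => (k : ZMod (6*m+3))) ''
      ↑(Finset.Icc 1 m ∪ Finset.Icc (2*m+2) (3*m+1) ∪ Finset.Icc (4*m+3) (5*m+2)) := by
  ext x
  simp only [Set.mem_image, Finset.coe_union, Finset.coe_Icc, Set.mem_union, Set.mem_Icc]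
  constructor
  · rintro ⟨q, r, hq, hr1, hr2, rfl⟩
    refine ⟨(2*m+1)*q + r, ?_, rfl⟩
    interval_cases q <;> omega
  · rintro ⟨k, hk, rfl⟩
    rcases hk with (⟨h1, h2⟩ | ⟨h1, h2⟩) | ⟨h1, h2⟩
    · exact ⟨0, k, by omega, h1, h2, by norm_num⟩
    · exact ⟨1, k - (2*m+1), by omega, by omega, by omega, by congr 1; omega⟩
    · exact ⟨2, k - (4*m+2), by omega, by omega, by omega, by congr 1; omega⟩

lemma R_eq (hm : 1 ≤ m) :
    Rset m = (fun k : ℕ => (k : ZMod (6*m+3))) ''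
      ↑(Finset.Icc (m+1) (2*m) ∪ Finset.Icc (3*m+2) (4*m+1) ∪ Finset.Icc (5*m+3) (6*m+2)) := by
  ext x
  simp only [Set.mem_image, Finset.coe_union, Finset.coe_Icc, Set.mem_union, Set.mem_Icc]
  constructor
  · rintro ⟨q, r, hq, hr1, hr2, rfl⟩
    refine ⟨(2*m+1)*q + r, ?_, rfl⟩
    interval_cases q <;> omega
  · rintro ⟨k, hk, rfl⟩
    rcases hk with (⟨h1, h2⟩ | ⟨h1, h2⟩) | ⟨h1, h2⟩
    · exact ⟨0, k, by omega, by omega, by omega, by norm_num⟩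
    · exact ⟨1, k - (2*m+1), by omega, by omega, by omega, by congr 1; omega⟩
    · exact ⟨2, k - (4*m+2), by omega, by omega, by omega, by congr 1; omega⟩

lemma card_W (hm : 1 ≤ m) : (Wset m).ncard = 3*m := by
  rw [W_eq, ncard_image]
  · rw [Finset.card_union_of_disjoint, Finset.card_union_of_disjoint] <;>
      first
        | (simp only [Nat.card_Icc]; omega)
        | (rw [Finset.disjoint_left]; intro a ha hb;
            simp only [Finset.mem_union, Finset.mem_Icc] at ha hb; omega)
  · intro s hs
    simp only [Finset.mem_union, Finset.mem_Icc] at hs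
    omega

lemma card_R (hm : 1 ≤ m) : (Rset m).ncard = 3*m := by
  rw [R_eq m hm, ncard_image]
  · rw [Finset.card_union_of_disjoint, Finset.card_union_of_disjoint] <;>
      first
        | (simp only [Nat.card_Icc]; omega)
        | (rw [Finset.disjoint_left]; intro a ha hb;
            simp only [Finset.mem_union, Finset.mem_Icc] at ha hb; omega)
  · intro s hs
    simp only [Finset.mem_union, Finset.mem_Icc] at hs
    omega


def Bset (m : ℕ) : Set (ZMod (6*m+3)) :=
  {(0 : ZMod (6*m+3)), ((2*m+1 : ℕ) : ZMod (6*m+3)), ((4*m+2 : ℕ) : ZMod (6*m+3))}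

lemma ne_c0 (hm : 1 ≤ m) : ((2*m+1:ℕ) : ZMod (6*m+3)) ≠ 0 := by
  intro h
  have := cast_inj m (show 2*m+1 < 6*m+3 by omega) (show 0 < 6*m+3 by omega)
    (by rw [Nat.cast_zero]; exact h)
  omega

lemma ne_2c0 (hm : 1 ≤ m) : ((4*m+2:ℕ) : ZMod (6*m+3)) ≠ 0 := by
  intro h
  have := cast_inj m (show 4*m+2 < 6*m+3 by omega) (show 0 < 6*m+3 by omega)
    (by rw [Nat.cast_zero]; exact h)
  omega

lemma ne_c2c (hm : 1 ≤ m) : ((2*m+1:ℕ) : ZMod (6*m+3)) ≠ ((4*m+2:ℕ) : ZMod (6*m+3)) := by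
  intro h
  have := cast_inj m (by omega) (by omega) h
  omega

lemma disj_BW : Disjoint (Bset m) (Wset m) := by
  rw [Set.disjoint_left]
  rintro x hx ⟨q, r, hq, hr1, hr2, rfl⟩
  simp only [Bset, Set.mem_insert_iff, Set.mem_singleton_iff] at hx
  have hb : (2*m+1)*q + r < 6*m+3 := by interval_cases q <;> omega
  rcases hx with h | h | h
  · have := cast_inj m hb (show 0 < 6*m+3 by omega) (by rw [Nat.cast_zero]; exact h)
    interval_cases q <;> omega
  · have := cast_inj m hb (by omega) h
    interval_cases q <;> omega
  · have := cast_inj m hb (by omega) h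
    interval_cases q <;> omega

lemma disj_BR : Disjoint (Bset m) (Rset m) := by
  rw [Set.disjoint_left]
  rintro x hx ⟨q, r, hq, hr1, hr2, rfl⟩
  simp only [Bset, Set.mem_insert_iff, Set.mem_singleton_iff] at hx
  have hb : (2*m+1)*q + r < 6*m+3 := by interval_cases q <;> omega
  rcases hx with h | h | h
  · have := cast_inj m hb (show 0 < 6*m+3 by omega) (by rw [Nat.cast_zero]; exact h)
    interval_cases q <;> omega
  · have := cast_inj m hb (by omega) h
    interval_cases q <;> omega
  · have := cast_inj m hb (by omega) h
    interval_cases q <;> omega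

lemma disj_WR : Disjoint (Wset m) (Rset m) := by
  rw [Set.disjoint_left]
  rintro x ⟨q, r, hq, hr1, hr2, rfl⟩ ⟨q', r', hq', hr1', hr2', heq⟩
  have hb : (2*m+1)*q + r < 6*m+3 := by interval_cases q <;> omega
  have hb' : (2*m+1)*q' + r' < 6*m+3 := by interval_cases q' <;> omega
  have := cast_inj m hb hb' heq
  interval_cases q <;> interval_cases q' <;> omega

lemma ecc : ((2*m+1:ℕ):ZMod (6*m+3)) + ((2*m+1:ℕ):ZMod (6*m+3))
    = ((4*m+2:ℕ):ZMod (6*m+3)) := by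
  rw [← Nat.cast_add]; congr 1; omega

lemma ec0 : ((4*m+2:ℕ):ZMod (6*m+3)) + ((2*m+1:ℕ):ZMod (6*m+3)) = 0 := by
  rw [← Nat.cast_add]
  have e : 4*m+2 + (2*m+1) = 6*m+3 := by omega
  rw [e, ZMod.natCast_self]

lemma cntW12 (hm : 1 ≤ m) :
    (Wset m ∩ cycInterval ((2*m+1:ℕ):ZMod (6*m+3)) ((4*m+2:ℕ):ZMod (6*m+3))).ncard = m := by
  have h := shift_ncard (Wset m) _ (Winv m) 0 ((2*m+1:ℕ):ZMod (6*m+3))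
  rw [zero_add, ecc m] at h
  rw [h]; exact baseW m hm

lemma cntW20 (hm : 1 ≤ m) :
    (Wset m ∩ cycInterval ((4*m+2:ℕ):ZMod (6*m+3)) 0).ncard = m := by
  have h := shift_ncard (Wset m) _ (Winv m) ((2*m+1:ℕ):ZMod (6*m+3)) ((4*m+2:ℕ):ZMod (6*m+3))
  rw [ecc m, ec0 m] at h
  rw [h]; exact cntW12 m hm

lemma cnt12 : ((Wset m ∪ Rset m) ∩
    cycInterval ((2*m+1:ℕ):ZMod (6*m+3)) ((4*m+2:ℕ):ZMod (6*m+3))).ncard = 2*m := by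
  have h := shift_ncard (Wset m ∪ Rset m) _ (WRinv m) 0 ((2*m+1:ℕ):ZMod (6*m+3))
  rw [zero_add, ecc m] at h
  rw [h]; exact baseWR1 m

lemma cnt20 : ((Wset m ∪ Rset m) ∩
    cycInterval ((4*m+2:ℕ):ZMod (6*m+3)) 0).ncard = 2*m := by
  have h := shift_ncard (Wset m ∪ Rset m) _ (WRinv m) ((2*m+1:ℕ):ZMod (6*m+3))
    ((4*m+2:ℕ):ZMod (6*m+3))
  rw [ecc m, ec0 m] at h
  rw [h]; exact cnt12 m

lemma cnt10 : ((Wset m ∪ Rset m) ∩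
    cycInterval ((2*m+1:ℕ):ZMod (6*m+3)) 0).ncard = 4*m := by
  have h := shift_ncard (Wset m ∪ Rset m) _ (WRinv m) 0 ((4*m+2:ℕ):ZMod (6*m+3))
  rw [zero_add, ec0 m] at h
  rw [h]; exact baseWR2 m

lemma cnt21 : ((Wset m ∪ Rset m) ∩
    cycInterval ((4*m+2:ℕ):ZMod (6*m+3)) ((2*m+1:ℕ):ZMod (6*m+3))).ncard = 4*m := by
  have h := shift_ncard (Wset m ∪ Rset m) _ (WRinv m) ((2*m+1:ℕ):ZMod (6*m+3)) 0
  rw [ecc m, zero_add] at h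
  rw [h]; exact cnt10 m

lemma mid02 : ((2*m+1:ℕ):ZMod (6*m+3)) ∈ cycInterval 0 ((4*m+2:ℕ):ZMod (6*m+3)) := by
  rw [mem_cyc0 m (4*m+2) (by omega), ZMod.val_cast_of_lt (by omega : 2*m+1 < 6*m+3)]
  omega

lemma mid10 : ((4*m+2:ℕ):ZMod (6*m+3)) ∈ cycInterval ((2*m+1:ℕ):ZMod (6*m+3)) 0 := by
  have h1 : (((4*m+2:ℕ):ZMod (6*m+3)) - ((2*m+1:ℕ):ZMod (6*m+3))).val = 2*m+1 := by
    rw [val_sub_cast m _ _ (by omega)]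
    have e : 4*m+2 + (6*m+3) - (2*m+1) = (6*m+3) + (2*m+1) := by omega
    rw [e, Nat.add_mod_left, Nat.mod_eq_of_lt (by omega)]
  have h2 : ((0:ZMod (6*m+3)) - ((2*m+1:ℕ):ZMod (6*m+3))).val = 4*m+2 := by
    have e0 : (0 : ZMod (6*m+3)) = ((0:ℕ) : ZMod (6*m+3)) := by norm_num
    rw [e0, val_sub_cast m _ _ (by omega), Nat.mod_eq_of_lt (by omega)]
    omega
  show (((4*m+2:ℕ):ZMod (6*m+3)) - ((2*m+1:ℕ):ZMod (6*m+3))).val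
      ≤ ((0:ZMod (6*m+3)) - ((2*m+1:ℕ):ZMod (6*m+3))).val
  rw [h1, h2]; omega

lemma mid21 : (0:ZMod (6*m+3)) ∈
    cycInterval ((4*m+2:ℕ):ZMod (6*m+3)) ((2*m+1:ℕ):ZMod (6*m+3)) := by
  have e0 : (0 : ZMod (6*m+3)) = ((0:ℕ) : ZMod (6*m+3)) := by norm_num
  have h1 : ((0:ZMod (6*m+3)) - ((4*m+2:ℕ):ZMod (6*m+3))).val = 2*m+1 := by
    rw [e0, val_sub_cast m _ _ (by omega), Nat.mod_eq_of_lt (by omega)]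
    omega
  have h2 : (((2*m+1:ℕ):ZMod (6*m+3)) - ((4*m+2:ℕ):ZMod (6*m+3))).val = 4*m+2 := by
    rw [val_sub_cast m _ _ (by omega)]
    have e : 2*m+1 + (6*m+3) - (4*m+2) = 4*m+2 := by omega
    rw [e, Nat.mod_eq_of_lt (by omega)]
  show ((0:ZMod (6*m+3)) - ((4*m+2:ℕ):ZMod (6*m+3))).val
      ≤ (((2*m+1:ℕ):ZMod (6*m+3)) - ((4*m+2:ℕ):ZMod (6*m+3))).val
  rw [h1, h2]; omega

lemma notcons02 (hm : 1 ≤ m) :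
    ¬ ConsecutiveIn (Bset m) 0 ((4*m+2:ℕ):ZMod (6*m+3)) := by
  rintro ⟨hne, hcons⟩
  rcases hcons ((2*m+1:ℕ):ZMod (6*m+3)) (by right; left; rfl) (mid02 m) with h | h
  · exact ne_c0 m hm h
  · exact ne_c2c m hm h

lemma notcons10 (hm : 1 ≤ m) :
    ¬ ConsecutiveIn (Bset m) ((2*m+1:ℕ):ZMod (6*m+3)) 0 := by
  rintro ⟨hne, hcons⟩
  rcases hcons ((4*m+2:ℕ):ZMod (6*m+3)) (by right; right; rfl) (mid10 m) with h | h
  · exact ne_c2c m hm h.symm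
  · exact ne_2c0 m hm h

lemma notcons21 (hm : 1 ≤ m) :
    ¬ ConsecutiveIn (Bset m) ((4*m+2:ℕ):ZMod (6*m+3)) ((2*m+1:ℕ):ZMod (6*m+3)) := by
  rintro ⟨hne, hcons⟩
  rcases hcons 0 (by left; rfl) (mid21 m) with h | h
  · exact ne_2c0 m hm h.symm
  · exact ne_c0 m hm h.symm

end DLaux

/-- **Necessity of the strict inequality `|W| > |R|` in the Division Lemma.**
With `N = 6m + 3`, `B = {0, 2m+1, 4m+2}`, and `W`, `R` consisting of `m` white points followed
by `m` red points inside each of the three arcs between consecutive black points, all the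
hypotheses of the Division Lemma hold except that `|W| = |R|`, and its conclusion for
`p = 3m` fails: every interval between distinct black points contains either `2m` or `4m`
white-or-red points. -/
theorem division_lemma_needs_strict (m : ℕ) (hm : 1 ≤ m) :
    let N := 6 * m + 3
    let B : Set (ZMod N) := {(0 : ZMod N), ((2 * m + 1 : ℕ) : ZMod N), ((4 * m + 2 : ℕ) : ZMod N)}
    let W : Set (ZMod N) := {x | ∃ q r : ℕ, q ≤ 2 ∧ 1 ≤ r ∧ r ≤ m ∧
      x = (((2 * m + 1) * q + r : ℕ) : ZMod N)}
    let R : Set (ZMod N) := {x | ∃ q r : ℕ, q ≤ 2 ∧ m + 1 ≤ r ∧ r ≤ 2 * m ∧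
      x = (((2 * m + 1) * q + r : ℕ) : ZMod N)}
    Disjoint B W ∧ Disjoint B R ∧ Disjoint W R ∧
    W.ncard = 3 * m ∧ R.ncard = 3 * m ∧
    (∀ b ∈ B, ∀ b' ∈ B, ConsecutiveIn B b b' → (W ∩ cycInterval b b').ncard = m) ∧
    (∀ b ∈ B, ∀ b' ∈ B, b ≠ b' →
      ((W ∪ R) ∩ cycInterval b b').ncard = 2 * m ∨
      ((W ∪ R) ∩ cycInterval b b').ncard = 4 * m) ∧
    ¬ ∃ b ∈ B, ∃ b' ∈ B, b ≠ b' ∧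
      2 * m < ((W ∪ R) ∩ cycInterval b b').ncard ∧
      ((W ∪ R) ∩ cycInterval b b').ncard < 4 * m := by
  intro N B W R
  have key : ∀ b ∈ B, ∀ b' ∈ B, b ≠ b' →
      ((W ∪ R) ∩ cycInterval b b').ncard = 2 * m ∨
      ((W ∪ R) ∩ cycInterval b b').ncard = 4 * m := by
    intro b hb b' hb' hne
    have hb2 : b = 0 ∨ b = ((2*m+1:ℕ):ZMod N) ∨ b = ((4*m+2:ℕ):ZMod N) := hb
    have hb'2 : b' = 0 ∨ b' = ((2*m+1:ℕ):ZMod N) ∨ b' = ((4*m+2:ℕ):ZMod N) := hb'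
    rcases hb2 with rfl | rfl | rfl <;> rcases hb'2 with rfl | rfl | rfl
    · exact absurd rfl hne
    · exact Or.inl (DLaux.baseWR1 m)
    · exact Or.inr (DLaux.baseWR2 m)
    · exact Or.inr (DLaux.cnt10 m)
    · exact absurd rfl hne
    · exact Or.inl (DLaux.cnt12 m)
    · exact Or.inl (DLaux.cnt20 m)
    · exact Or.inr (DLaux.cnt21 m)
    · exact absurd rfl hne
  have cons : ∀ b ∈ B, ∀ b' ∈ B, ConsecutiveIn B b b' →
      (W ∩ cycInterval b b').ncard = m := by
    intro b hb b' hb' hcons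
    have hb2 : b = 0 ∨ b = ((2*m+1:ℕ):ZMod N) ∨ b = ((4*m+2:ℕ):ZMod N) := hb
    have hb'2 : b' = 0 ∨ b' = ((2*m+1:ℕ):ZMod N) ∨ b' = ((4*m+2:ℕ):ZMod N) := hb'
    rcases hb2 with rfl | rfl | rfl <;> rcases hb'2 with rfl | rfl | rfl
    · exact absurd rfl hcons.1
    · exact DLaux.baseW m hm
    · exact absurd hcons (DLaux.notcons02 m hm)
    · exact absurd hcons (DLaux.notcons10 m hm)
    · exact absurd rfl hcons.1
    · exact DLaux.cntW12 m hm
    · exact DLaux.cntW20 m hm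
    · exact absurd hcons (DLaux.notcons21 m hm)
    · exact absurd rfl hcons.1
  refine ⟨DLaux.disj_BW m, DLaux.disj_BR m, DLaux.disj_WR m,
    DLaux.card_W m hm, DLaux.card_R m hm, cons, key, ?_⟩
  rintro ⟨b, hb, b', hb', hne, h1, h2⟩
  rcases key b hb b' hb' hne with h | h <;> omega
end

section
/- Sharpness of the Division Lemma for integer p: Let m ≥ 1 be an integer and N = 4m + 1. In ZMod N, let B = {0, m+1}, let W = {r : 1 ≤ r ≤ m} ∪ {m+1+r : 1 ≤ r ≤ m}, and let R = {2m+1+r : 1 ≤ r ≤ 2m−1} (all taken as elements of ZMod N). Then B, W, R are pairwise disjoint, |W| = 2m, |R| = 2m − 1 (so |W| > |R|), for each pair of consecutive black points b, b′ ∈ B one has |W ∩ [b, b′]| = m, and for every pair of distinct black points b, b′ ∈ B one has |(W ∪ R) ∩ [b, b′]| ∈ {m, 3m−1}; in particular, taking p = 2m − 1, every such count q satisfies |q − p| ≥ m − 1, so the bound |q − p| ≤ m − 1 implied by the Division Lemma for integer p cannot be improved. -/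
lemma ncard_eq_of_val_mem {N : ℕ} [NeZero N] (S : Set (ZMod N)) (T : Finset ℕ)
    (hT : ∀ k ∈ T, k < N)
    (h : ∀ x : ZMod N, x ∈ S ↔ x.val ∈ T) : S.ncard = T.card := by
  classical
  have hS : S = ↑(T.image (Nat.cast : ℕ → ZMod N)) := by
    ext x
    simp only [Finset.coe_image, Set.mem_image, Finset.mem_coe, h]
    constructor
    · intro hx
      exact ⟨x.val, hx, ZMod.natCast_rightInverse x⟩
    · rintro ⟨k, hk, rfl⟩
      rwa [ZMod.val_cast_of_lt (hT k hk)]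
  rw [hS, Set.ncard_coe_finset, Finset.card_image_of_injOn]
  intro a ha b hb hab
  have := congrArg ZMod.val hab
  rwa [ZMod.val_cast_of_lt (hT a ha), ZMod.val_cast_of_lt (hT b hb)] at this

/-- **Sharpness of the Division Lemma for integer `p`.**
With `N = 4m + 1`, black points `B = {0, m+1}`, white points `W = [1,m] ∪ [m+2, 2m+1]`, and
red points `R = [2m+2, 4m]`, all hypotheses of the Division Lemma hold, but every interval
between distinct black points contains `m` or `3m - 1` white-or-red points; in particular
every such count `q` satisfies `|q - p| ≥ m - 1` for `p = 2m - 1`, so the bound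
`|q - p| ≤ m - 1` for integer `p` cannot be improved. -/
theorem division_lemma_sharp_integer (m : ℕ) (hm : 1 ≤ m) :
    let N := 4 * m + 1
    let B : Set (ZMod N) := {(0 : ZMod N), ((m + 1 : ℕ) : ZMod N)}
    let W : Set (ZMod N) := {x | ∃ r : ℕ, 1 ≤ r ∧ r ≤ m ∧
      (x = ((r : ℕ) : ZMod N) ∨ x = ((m + 1 + r : ℕ) : ZMod N))}
    let R : Set (ZMod N) := {x | ∃ r : ℕ, 1 ≤ r ∧ r ≤ 2 * m - 1 ∧
      x = ((2 * m + 1 + r : ℕ) : ZMod N)}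
    Disjoint B W ∧ Disjoint B R ∧ Disjoint W R ∧
    W.ncard = 2 * m ∧ R.ncard = 2 * m - 1 ∧ R.ncard < W.ncard ∧
    (∀ b ∈ B, ∀ b' ∈ B, ConsecutiveIn B b b' → (W ∩ cycInterval b b').ncard = m) ∧
    (∀ b ∈ B, ∀ b' ∈ B, b ≠ b' →
      ((W ∪ R) ∩ cycInterval b b').ncard = m ∨
      ((W ∪ R) ∩ cycInterval b b').ncard = 3 * m - 1) ∧
    (∀ b ∈ B, ∀ b' ∈ B, b ≠ b' →
      (m : ℤ) - 1 ≤ |(((W ∪ R) ∩ cycInterval b b').ncard : ℤ) - (2 * (m : ℤ) - 1)|) := by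
  intro N B W R
  have hN : N = 4 * m + 1 := rfl
  haveI : NeZero N := ⟨by omega⟩
  -- basic val facts
  have hvlt : ∀ x : ZMod N, x.val < 4 * m + 1 := fun x => hN ▸ ZMod.val_lt x
  have hcast : ∀ k : ℕ, k < 4 * m + 1 → ((k : ℕ) : ZMod N).val = k := by
    intro k hk
    exact ZMod.val_cast_of_lt (by omega)
  have hself : ∀ x : ZMod N, ((x.val : ℕ) : ZMod N) = x := fun x => ZMod.natCast_rightInverse x
  -- subtraction of m+1
  have hsub : ∀ v : ℕ, ((v : ZMod N)) - (((m + 1 : ℕ)) : ZMod N) = ((v + 3 * m : ℕ) : ZMod N) := by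
    intro v
    have h0 : ((4 * m + 1 : ℕ) : ZMod N) = 0 := by
      have := ZMod.natCast_self N
      rwa [hN] at this
    push_cast at h0 ⊢
    linear_combination -h0
  have hI2val : ∀ x : ZMod N,
      (x - (((m + 1 : ℕ)) : ZMod N)).val = (x.val + 3 * m) % (4 * m + 1) := by
    intro x
    conv_lhs => rw [← hself x]
    rw [hsub, ZMod.val_natCast]
  have hmod : ∀ a : ℕ, a < 2 * (4 * m + 1) →
      a % (4 * m + 1) = if a < 4 * m + 1 then a else a - (4 * m + 1) := by
    intro a ha
    split
    · exact Nat.mod_eq_of_lt ‹_›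
    · rw [Nat.mod_eq_sub_mod (by omega), Nat.mod_eq_of_lt (by omega)]
  -- interval characterizations
  have hI1 : ∀ x : ZMod N, x ∈ cycInterval (0 : ZMod N) (((m + 1 : ℕ)) : ZMod N) ↔
      x.val ≤ m + 1 := by
    intro x
    show (x - 0).val ≤ ((((m + 1 : ℕ)) : ZMod N) - 0).val ↔ _
    rw [sub_zero, sub_zero, hcast _ (by omega)]
  have hI2 : ∀ x : ZMod N, x ∈ cycInterval (((m + 1 : ℕ)) : ZMod N) (0 : ZMod N) ↔
      (x.val = 0 ∨ m + 1 ≤ x.val) := by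
    intro x
    have h0 : ((0 : ZMod N) - (((m + 1 : ℕ)) : ZMod N)).val = 3 * m := by
      have := hsub 0
      rw [Nat.cast_zero] at this
      rw [this]
      have : ((0 + 3 * m : ℕ) : ZMod N).val = 0 + 3 * m := hcast _ (by omega)
      omega
    show (x - _).val ≤ ((0 : ZMod N) - _).val ↔ _
    rw [hI2val, h0]
    have hv := hvlt x
    rw [hmod _ (by omega)]
    split <;> omega
  -- membership by val
  have hWv : ∀ x : ZMod N, x ∈ W ↔
      ((1 ≤ x.val ∧ x.val ≤ m) ∨ (m + 2 ≤ x.val ∧ x.val ≤ 2 * m + 1)) := by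
    intro x
    constructor
    · rintro ⟨r, h1, h2, rfl | rfl⟩
      · rw [hcast r (by omega)]; omega
      · rw [hcast _ (by omega)]; omega
    · rintro (⟨h1, h2⟩ | ⟨h1, h2⟩)
      · exact ⟨x.val, h1, h2, Or.inl (hself x).symm⟩
      · refine ⟨x.val - (m + 1), by omega, by omega, Or.inr ?_⟩
        rw [show m + 1 + (x.val - (m + 1)) = x.val from by omega, hself]
  have hRv : ∀ x : ZMod N, x ∈ R ↔ (2 * m + 2 ≤ x.val ∧ x.val ≤ 4 * m) := by
    intro x
    constructor
    · rintro ⟨r, h1, h2, rfl⟩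
      rw [hcast _ (by omega)]; omega
    · rintro ⟨h1, h2⟩
      refine ⟨x.val - (2 * m + 1), by omega, by omega, ?_⟩
      rw [show 2 * m + 1 + (x.val - (2 * m + 1)) = x.val from by omega, hself]
  have hBv : ∀ x : ZMod N, x ∈ B ↔ (x.val = 0 ∨ x.val = m + 1) := by
    intro x
    simp only [B, Set.mem_insert_iff, Set.mem_singleton_iff]
    constructor
    · rintro (rfl | rfl)
      · left; exact ZMod.val_zero
      · right; exact hcast _ (by omega)
    · rintro (h | h)
      · left; rw [← hself x, h, Nat.cast_zero]
      · right; rw [← hself x, h]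
  -- cardinalities
  have hWcard : W.ncard = 2 * m := by
    rw [ncard_eq_of_val_mem W (Finset.Icc 1 m ∪ Finset.Icc (m + 2) (2 * m + 1))
      (by intro k hk; simp only [Finset.mem_union, Finset.mem_Icc] at hk; omega)
      (by intro x; rw [hWv]; simp only [Finset.mem_union, Finset.mem_Icc])]
    rw [Finset.card_union_of_disjoint (by
      simp only [Finset.disjoint_left, Finset.mem_Icc]
      intro a ha hb
      omega)]
    simp only [Nat.card_Icc]
    omega
  have hRcard : R.ncard = 2 * m - 1 := by
    rw [ncard_eq_of_val_mem R (Finset.Icc (2 * m + 2) (4 * m))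
      (by intro k hk; simp only [Finset.mem_Icc] at hk; omega)
      (by intro x; rw [hRv]; simp only [Finset.mem_Icc])]
    simp only [Nat.card_Icc]
    omega
  -- intersection counts
  have hc1 : (W ∩ cycInterval (0 : ZMod N) (((m + 1 : ℕ)) : ZMod N)).ncard = m := by
    rw [ncard_eq_of_val_mem _ (Finset.Icc 1 m)
      (by intro k hk; simp only [Finset.mem_Icc] at hk; omega)
      (by
        intro x
        simp only [Set.mem_inter_iff, hWv, hI1, Finset.mem_Icc]
        omega)]
    simp only [Nat.card_Icc]
    omega
  have hc2 : (W ∩ cycInterval (((m + 1 : ℕ)) : ZMod N) (0 : ZMod N)).ncard = m := by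
    rw [ncard_eq_of_val_mem _ (Finset.Icc (m + 2) (2 * m + 1))
      (by intro k hk; simp only [Finset.mem_Icc] at hk; omega)
      (by
        intro x
        simp only [Set.mem_inter_iff, hWv, hI2, Finset.mem_Icc]
        omega)]
    simp only [Nat.card_Icc]
    omega
  have hd1 : ((W ∪ R) ∩ cycInterval (0 : ZMod N) (((m + 1 : ℕ)) : ZMod N)).ncard = m := by
    rw [ncard_eq_of_val_mem _ (Finset.Icc 1 m)
      (by intro k hk; simp only [Finset.mem_Icc] at hk; omega)
      (by
        intro x
        simp only [Set.mem_inter_iff, Set.mem_union, hWv, hRv, hI1, Finset.mem_Icc]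
        omega)]
    simp only [Nat.card_Icc]
    omega
  have hd2 : ((W ∪ R) ∩ cycInterval (((m + 1 : ℕ)) : ZMod N) (0 : ZMod N)).ncard = 3 * m - 1 := by
    rw [ncard_eq_of_val_mem _ (Finset.Icc (m + 2) (4 * m))
      (by intro k hk; simp only [Finset.mem_Icc] at hk; omega)
      (by
        intro x
        simp only [Set.mem_inter_iff, Set.mem_union, hWv, hRv, hI2, Finset.mem_Icc]
        omega)]
    simp only [Nat.card_Icc]
    omega
  have hBne : (0 : ZMod N) ≠ (((m + 1 : ℕ)) : ZMod N) := by
    intro h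
    have := congrArg ZMod.val h
    rw [ZMod.val_zero, hcast _ (by omega)] at this
    omega
  -- the eighth clause (counts are m or 3m-1)
  have h8 : ∀ b ∈ B, ∀ b' ∈ B, b ≠ b' →
      ((W ∪ R) ∩ cycInterval b b').ncard = m ∨
      ((W ∪ R) ∩ cycInterval b b').ncard = 3 * m - 1 := by
    intro b hb b' hb' hne
    simp only [B, Set.mem_insert_iff, Set.mem_singleton_iff] at hb hb'
    rcases hb with rfl | rfl <;> rcases hb' with rfl | rfl
    · exact absurd rfl hne
    · exact Or.inl hd1
    · exact Or.inr hd2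
    · exact absurd rfl hne
  refine ⟨?_, ?_, ?_, hWcard, hRcard, by omega, ?_, h8, ?_⟩
  · rw [Set.disjoint_left]
    intro x hx hx'
    rw [hBv] at hx
    rw [hWv] at hx'
    omega
  · rw [Set.disjoint_left]
    intro x hx hx'
    rw [hBv] at hx
    rw [hRv] at hx'
    omega
  · rw [Set.disjoint_left]
    intro x hx hx'
    rw [hWv] at hx
    rw [hRv] at hx'
    omega
  · intro b hb b' hb' hcons
    have hne := hcons.1
    simp only [B, Set.mem_insert_iff, Set.mem_singleton_iff] at hb hb'
    rcases hb with rfl | rfl <;> rcases hb' with rfl | rfl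
    · exact absurd rfl hne
    · exact hc1
    · exact hc2
    · exact absurd rfl hne
  · intro b hb b' hb' hne
    rcases h8 b hb b' hb' hne with h | h <;> rw [h]
    · rcases abs_cases (((m : ℕ) : ℤ) - (2 * (m : ℤ) - 1)) with ⟨he, hs⟩ | ⟨he, hs⟩ <;>
        rw [he] <;> omega
    · rcases abs_cases (((3 * m - 1 : ℕ) : ℤ) - (2 * (m : ℤ) - 1)) with ⟨he, hs⟩ | ⟨he, hs⟩ <;>
        rw [he] <;> omega
end
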